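/- arXiv:2404.11837 — 6 statements merged into one kernel-verified Lean document; each statement's English description precedes it below -/
import Mathlib

section
/- Let d ≥ 1 and N ≥ 1, let Δ_d be a finite collection of d-element subsets of {1,…,N}, and let v_1,…,v_N ∈ ℝ^d be such that for each σ ∈ Δ_d the set {v_k : k ∈ σ} is a basis of ℝ^d. Suppose (f_σ)_{σ∈Δ_d} is a family of polynomials f_σ ∈ ℝ[t_1,…,t_d] such that whenever two members σ, σ′ ∈ Δ_d contain a common (d−1)-element subset τ, the difference f_σ − f_σ′ vanishes identically on the hyperplane spanned by {v_k : k ∈ τ}. If the weight w = (w_σ)_{σ∈Δ_d}, w_σ ∈ ℝ, is balanced, then the rational function Σ_{σ∈Δ_d} w_σ · f_σ/χ_σ, viewed as an element of the fraction field of ℝ[t_1,…,t_d], is a polynomial. -/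
open MvPolynomial

/-- The dual-basis linear functional `λ_{σ,i}` (with coefficient vector `L σ i`),
regarded as a homogeneous linear polynomial in `ℝ[t_1,…,t_d]`. -/
noncomputable def lamPoly (d N : ℕ) (L : Finset (Fin N) → Fin N → Fin d → ℝ)
    (σ : Finset (Fin N)) (i : Fin N) : MvPolynomial (Fin d) ℝ :=
  ∑ j, C (L σ i j) * X j

/-- `χ_σ = ∏_{i∈σ} λ_{σ,i}`. -/
noncomputable def chiPoly (d N : ℕ) (L : Finset (Fin N) → Fin N → Fin d → ℝ)
    (σ : Finset (Fin N)) : MvPolynomial (Fin d) ℝ :=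
  ∏ i ∈ σ, lamPoly d N L σ i


noncomputable def lin (d : ℕ) (a : Fin d → ℝ) : MvPolynomial (Fin d) ℝ :=
  ∑ j, C (a j) * X j

namespace StmtAux
variable {d : ℕ}

lemma eval_lin (a : Fin d → ℝ) (x : Fin d → ℝ) :
    eval x (lin d a) = ∑ j, a j * x j := by
  simp [lin]

lemma eval_aeval' (g : Fin d → MvPolynomial (Fin d) ℝ) (p : MvPolynomial (Fin d) ℝ)
    (x : Fin d → ℝ) :
    eval x (aeval g p) = eval (fun j => eval x (g j)) p := by
  rw [aeval_def, eval_eval₂]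
  have : ((eval x).comp (algebraMap ℝ (MvPolynomial (Fin d) ℝ))) = RingHom.id ℝ := by
    ext r; simp [MvPolynomial.algebraMap_eq]
  rw [this, eval₂_id]

lemma lin_smul (a : Fin d → ℝ) (c : ℝ) : lin d (c • a) = C c * lin d a := by
  simp only [lin, Finset.mul_sum, Pi.smul_apply, smul_eq_mul, map_mul]
  exact Finset.sum_congr rfl fun j _ => by ring

lemma dot_single (b : Fin d → ℝ) (j : Fin d) :
    ∑ k, b k * (Pi.single j (1:ℝ) : Fin d → ℝ) k = b j := by
  rw [Finset.sum_eq_single j]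
  · simp
  · intro k _ hk; simp [Pi.single_apply, hk]
  · simp

lemma lin_eq_zero (a : Fin d → ℝ) (h : lin d a = 0) : a = 0 := by
  funext j
  have := congrArg (eval (Pi.single j 1)) h
  rw [eval_lin, dot_single] at this
  simpa using this

lemma sum_update (b x : Fin d → ℝ) (j₀ : Fin d) (t : ℝ) :
    ∑ j, b j * Function.update x j₀ t j
      = b j₀ * t + ∑ j ∈ Finset.univ.erase j₀, b j * x j := by
  rw [← Finset.add_sum_erase _ (fun j => b j * Function.update x j₀ t j)
    (Finset.mem_univ j₀), Function.update_self]
  congr 1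
  exact Finset.sum_congr rfl fun j hj => by
    rw [Function.update_of_ne (Finset.ne_of_mem_erase hj)]

lemma sum_split (b x : Fin d → ℝ) (j₀ : Fin d) :
    ∑ j, b j * x j = b j₀ * x j₀ + ∑ j ∈ Finset.univ.erase j₀, b j * x j := by
  rw [← Finset.add_sum_erase _ (fun j => b j * x j) (Finset.mem_univ j₀)]

/-- functional vanishing on kernel of a is proportional -/
lemma exists_smul_of_ker_le {a b : Fin d → ℝ} {j₀ : Fin d} (ha : a j₀ ≠ 0)
    (h : ∀ x : Fin d → ℝ, ∑ j, a j * x j = 0 → ∑ j, b j * x j = 0) :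
    ∃ c : ℝ, b = c • a := by
  refine ⟨b j₀ / a j₀, funext fun j => ?_⟩
  set x : Fin d → ℝ := fun k => a j₀ * (Pi.single j (1:ℝ) : Fin d → ℝ) k - a j * (Pi.single j₀ (1:ℝ) : Fin d → ℝ) k with hx
  have hsum : ∀ u : Fin d → ℝ, ∑ k, u k * x k = a j₀ * u j - a j * u j₀ := by
    intro u
    have : ∀ k, u k * x k = a j₀ * (u k * (Pi.single j (1:ℝ) : Fin d → ℝ) k) - a j * (u k * (Pi.single j₀ (1:ℝ) : Fin d → ℝ) k) := by
      intro k; simp [hx]; ring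
    simp only [this, Finset.sum_sub_distrib, ← Finset.mul_sum, dot_single]
  have h0 : ∑ k, a k * x k = 0 := by rw [hsum]; ring
  have hb := h x h0
  rw [hsum] at hb
  have : a j₀ * b j = a j * b j₀ := by linarith
  rw [Pi.smul_apply, smul_eq_mul]
  field_simp
  linarith [this]
/-- the "set X j₀ to zero" substitution -/
noncomputable def zer (d : ℕ) (j₀ : Fin d) : Fin d → MvPolynomial (Fin d) ℝ :=
  fun j => if j = j₀ then 0 else X j

lemma X_dvd_sub_aeval_zer (j₀ : Fin d) (p : MvPolynomial (Fin d) ℝ) :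
    X j₀ ∣ (p - aeval (zer d j₀) p) := by
  induction p using MvPolynomial.induction_on with
  | C c => simp
  | add p q hp hq =>
      have := dvd_add hp hq
      simpa [sub_add_sub_comm] using this
  | mul_X p n hp =>
      by_cases h : n = j₀
      · rw [h]
        have : p * X j₀ - aeval (zer d j₀) (p * X j₀) = p * X j₀ := by
          simp [zer]
        rw [this]; exact Dvd.intro_left p rfl
      · have : p * X n - aeval (zer d j₀) (p * X n)
            = (p - aeval (zer d j₀) p) * X n := by
          simp [zer, h, sub_mul]
        rw [this]
        exact Dvd.dvd.mul_right hp _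

lemma X_dvd_iff_aeval_zer (j₀ : Fin d) (p : MvPolynomial (Fin d) ℝ) :
    X j₀ ∣ p ↔ aeval (zer d j₀) p = 0 := by
  constructor
  · rintro ⟨q, rfl⟩
    simp [zer]
  · intro h
    have := X_dvd_sub_aeval_zer j₀ p
    rwa [h, sub_zero] at this

section Psi
variable (a : Fin d → ℝ) (j₀ : Fin d)

noncomputable def Yf : Fin d → MvPolynomial (Fin d) ℝ :=
  fun j => if j = j₀ then C (a j₀)⁻¹ * (X j₀ - lin d (Function.update a j₀ 0)) else X j

noncomputable def Zf : Fin d → MvPolynomial (Fin d) ℝ :=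
  fun j => if j = j₀ then lin d a else X j

noncomputable def wmap (x : Fin d → ℝ) : Fin d → ℝ :=
  Function.update x j₀ ((a j₀)⁻¹ * (x j₀ - ∑ j, Function.update a j₀ 0 j * x j))

noncomputable def umap (x : Fin d → ℝ) : Fin d → ℝ :=
  Function.update x j₀ (∑ j, a j * x j)

lemma sum_update_left (x : Fin d → ℝ) :
    ∑ j, Function.update a j₀ 0 j * x j = ∑ j ∈ Finset.univ.erase j₀, a j * x j := by
  rw [sum_split (Function.update a j₀ 0) x j₀, Function.update_self, zero_mul, zero_add]
  exact Finset.sum_congr rfl fun j hj => by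
    rw [Function.update_of_ne (Finset.ne_of_mem_erase hj)]

lemma eval_psi (x : Fin d → ℝ) (p : MvPolynomial (Fin d) ℝ) :
    eval x (aeval (Yf a j₀) p) = eval (wmap a j₀ x) p := by
  have hfn : (fun j => eval x (Yf a j₀ j)) = wmap a j₀ x := by
    funext j
    by_cases h : j = j₀
    · subst h
      simp [Yf, wmap, eval_lin]
    · simp [Yf, wmap, h, Function.update_of_ne h]
  rw [eval_aeval', hfn]

lemma eval_psi' (x : Fin d → ℝ) (p : MvPolynomial (Fin d) ℝ) :
    eval x (aeval (Zf a j₀) p) = eval (umap a j₀ x) p := by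
  have hfn : (fun j => eval x (Zf a j₀ j)) = umap a j₀ x := by
    funext j
    by_cases h : j = j₀
    · subst h
      simp [Zf, umap, eval_lin]
    · simp [Zf, umap, h, Function.update_of_ne h]
  rw [eval_aeval', hfn]

lemma dot_wmap (ha : a j₀ ≠ 0) (x : Fin d → ℝ) :
    ∑ j, a j * wmap a j₀ x j = x j₀ := by
  rw [wmap, sum_update, sum_update_left]
  field_simp
  ring

lemma wmap_umap (ha : a j₀ ≠ 0) (x : Fin d → ℝ) : wmap a j₀ (umap a j₀ x) = x := by
  funext j
  by_cases h : j = j₀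
  · rw [h, wmap, Function.update_self, sum_update_left]
    have h1 : umap a j₀ x j₀ = ∑ k, a k * x k := by rw [umap, Function.update_self]
    have h2 : ∀ jj ∈ Finset.univ.erase j₀, a jj * umap a j₀ x jj = a jj * x jj :=
      fun jj hjj => by rw [umap, Function.update_of_ne (Finset.ne_of_mem_erase hjj)]
    rw [h1, Finset.sum_congr rfl h2, sum_split a x j₀]
    field_simp
    ring
  · rw [wmap, Function.update_of_ne h, umap, Function.update_of_ne h]

lemma umap_wmap (ha : a j₀ ≠ 0) (x : Fin d → ℝ) : umap a j₀ (wmap a j₀ x) = x := by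
  funext j
  by_cases h : j = j₀
  · rw [h, umap, Function.update_self, dot_wmap a j₀ ha]
  · rw [umap, Function.update_of_ne h, wmap, Function.update_of_ne h]

lemma psi_psi' (ha : a j₀ ≠ 0) (p : MvPolynomial (Fin d) ℝ) :
    aeval (Yf a j₀) (aeval (Zf a j₀) p) = p := by
  apply MvPolynomial.funext
  intro x
  rw [eval_psi, eval_psi', umap_wmap a j₀ ha]

lemma psi'_psi (ha : a j₀ ≠ 0) (p : MvPolynomial (Fin d) ℝ) :
    aeval (Zf a j₀) (aeval (Yf a j₀) p) = p := by
  apply MvPolynomial.funext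
  intro x
  rw [eval_psi', eval_psi, wmap_umap a j₀ ha]

lemma psi_lin (ha : a j₀ ≠ 0) : aeval (Yf a j₀) (lin d a) = X j₀ := by
  apply MvPolynomial.funext
  intro x
  rw [eval_psi, eval_lin, dot_wmap a j₀ ha, eval_X]

lemma lin_dvd_iff (ha : a j₀ ≠ 0) (g : MvPolynomial (Fin d) ℝ) :
    lin d a ∣ g ↔ aeval (zer d j₀) (aeval (Yf a j₀) g) = 0 := by
  constructor
  · rintro ⟨h, rfl⟩
    rw [map_mul, psi_lin a j₀ ha, map_mul]
    simp [zer]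
  · intro h
    have hX : X j₀ ∣ aeval (Yf a j₀) g := (X_dvd_iff_aeval_zer j₀ _).2 h
    obtain ⟨q, hq⟩ := hX
    refine ⟨aeval (Zf a j₀) q, ?_⟩
    have := congrArg (aeval (Zf a j₀)) hq
    rw [psi'_psi a j₀ ha, map_mul, aeval_X] at this
    rw [this]
    congr 1
    simp [Zf]

lemma lin_dvd_of_vanish {a : Fin d → ℝ} (ha : a ≠ 0) {g : MvPolynomial (Fin d) ℝ}
    (hvan : ∀ x : Fin d → ℝ, ∑ j, a j * x j = 0 → eval x g = 0) :
    lin d a ∣ g := by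
  obtain ⟨j₀, hj₀'⟩ := Function.ne_iff.1 ha
  have hj₀ : a j₀ ≠ 0 := by simpa using hj₀'
  rw [lin_dvd_iff a j₀ hj₀ g]
  apply MvPolynomial.funext (q := 0)
  intro x
  rw [map_zero, eval_aeval']
  have hx : (fun j => eval x (zer d j₀ j)) = Function.update x j₀ 0 := by
    funext j
    by_cases h : j = j₀
    · subst h
      simp [zer]
    · simp [zer, h, Function.update_of_ne h]
  rw [hx, eval_psi]
  apply hvan
  rw [dot_wmap a j₀ hj₀, Function.update_self]

lemma prime_lin {a : Fin d → ℝ} (ha : a ≠ 0) : Prime (lin d a) := by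
  obtain ⟨j₀, hj₀'⟩ := Function.ne_iff.1 ha
  have hj₀ : a j₀ ≠ 0 := by simpa using hj₀'
  refine ⟨fun h => ha (lin_eq_zero a h), fun hu => ?_, fun p q hpq => ?_⟩
  · have h1 : lin d a ∣ 1 := hu.dvd
    rw [lin_dvd_iff a j₀ hj₀ 1, map_one, map_one] at h1
    exact one_ne_zero h1
  · rw [lin_dvd_iff a j₀ hj₀] at hpq
    rw [map_mul, map_mul, mul_eq_zero] at hpq
    rcases hpq with h | h
    · exact Or.inl ((lin_dvd_iff a j₀ hj₀ p).2 h)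
    · exact Or.inr ((lin_dvd_iff a j₀ hj₀ q).2 h)

lemma prop_of_lin_dvd_lin {a b : Fin d → ℝ} (ha : a ≠ 0) (h : lin d a ∣ lin d b) :
    ∃ c : ℝ, b = c • a := by
  obtain ⟨j₀, hj₀'⟩ := Function.ne_iff.1 ha
  have hj₀ : a j₀ ≠ 0 := by simpa using hj₀'
  apply exists_smul_of_ker_le hj₀
  intro x hx
  obtain ⟨q, hq⟩ := h
  have := congrArg (eval x) hq
  rw [eval_lin, map_mul, eval_lin, hx, zero_mul] at this
  exact this

end Psi

lemma dot_single' (b : Fin d → ℝ) (j : Fin d) :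
    ∑ k, b k * (Pi.single j (1:ℝ) : Fin d → ℝ) k = b j := by
  rw [Finset.sum_eq_single j]
  · simp
  · intro k _ hk; simp [Pi.single_apply, hk]
  · simp

/-- the linear functional x ↦ ∑ a j * x j -/
noncomputable def dotMap (a : Fin d → ℝ) : (Fin d → ℝ) →ₗ[ℝ] ℝ where
  toFun x := ∑ j, a j * x j
  map_add' x y := by simp [mul_add, Finset.sum_add_distrib]
  map_smul' c x := by
    simp only [Pi.smul_apply, smul_eq_mul, RingHom.id_apply, Finset.mul_sum]
    exact Finset.sum_congr rfl fun j _ => by ring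

lemma dotMap_apply (a x : Fin d → ℝ) : dotMap a x = ∑ j, a j * x j := rfl

lemma finrank_ker_dotMap (a : Fin d → ℝ) (ha : a ≠ 0) :
    Module.finrank ℝ (LinearMap.ker (dotMap a)) = d - 1 := by
  have hrk := LinearMap.finrank_range_add_finrank_ker (dotMap a)
  have hdom : Module.finrank ℝ (Fin d → ℝ) = d := Module.finrank_fin_fun ℝ
  have hne : LinearMap.range (dotMap a) ≠ ⊥ := by
    obtain ⟨j, hj⟩ := Function.ne_iff.1 ha
    have hj' : a j ≠ 0 := by simpa using hj
    intro hb
    have : dotMap a (Pi.single j (1:ℝ)) = 0 := by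
      have := LinearMap.mem_range_self (dotMap a) (Pi.single j (1:ℝ))
      rw [hb] at this
      simpa using this
    rw [dotMap_apply, dot_single'] at this
    exact hj' this
  have h1 : 0 < Module.finrank ℝ (LinearMap.range (dotMap a)) := by
    rw [Module.finrank_pos_iff]
    exact Submodule.nontrivial_iff_ne_bot.2 hne
  have h2 : Module.finrank ℝ (LinearMap.range (dotMap a)) ≤ 1 := by
    have := Submodule.finrank_le (LinearMap.range (dotMap a))
    simpa using this
  have h3 : Module.finrank ℝ (LinearMap.range (dotMap a)) = 1 := le_antisymm h2 h1
  omega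

lemma ker_dotMap_eq_span {N : ℕ} (a : Fin d → ℝ) (ha : a ≠ 0)
    (u : Fin N → (Fin d → ℝ)) (t : Finset (Fin N))
    (hli : LinearIndependent ℝ (fun i : {x : Fin N // x ∈ t} => u i))
    (hcard : t.card + 1 = d)
    (hsub : ∀ i ∈ t, dotMap a (u i) = 0) :
    Submodule.span ℝ (u '' ↑t) = LinearMap.ker (dotMap a) := by
  have hle : Submodule.span ℝ (u '' ↑t) ≤ LinearMap.ker (dotMap a) := by
    rw [Submodule.span_le]
    rintro _ ⟨i, hi, rfl⟩
    exact hsub i hi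
  apply Submodule.eq_of_le_of_finrank_le hle
  have h1 : Module.finrank ℝ (Submodule.span ℝ (u '' ↑t)) = t.card := by
    have himg : u '' ↑t = Set.range (fun i : {x : Fin N // x ∈ t} => u i) := by
      rw [Set.image_eq_range]
      rfl
    rw [himg, finrank_span_eq_card hli, Fintype.card_coe]
  rw [h1, finrank_ker_dotMap a ha]
  omega

lemma prod_erase_eq_of_eq {α : Type*} [DecidableEq α] {s : Finset α} {a b : α}
    (ha : a ∈ s) (hb : b ∈ s) {f : α → ℝ} (h : f a = f b) :
    ∏ x ∈ s.erase a, f x = ∏ x ∈ s.erase b, f x := by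
  by_cases hab : a = b
  · rw [hab]
  · by_cases hz : f a = 0
    · rw [Finset.prod_eq_zero (Finset.mem_erase.2 ⟨fun hh => hab hh.symm, hb⟩) (h ▸ hz),
        Finset.prod_eq_zero (Finset.mem_erase.2 ⟨hab, ha⟩) hz]
    · have h1 := Finset.mul_prod_erase s f ha
      have h2 := Finset.mul_prod_erase s f hb
      apply mul_left_cancel₀ hz
      rw [h1, h, h2]



end StmtAux

namespace StmtAux

attribute [local instance] Classical.propDecidable

lemma combine {d : ℕ} (P : MvPolynomial (Fin d) ℝ) {ι : Type*} [DecidableEq ι]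
    (E : Finset ι) (La : ι → (Fin d → ℝ))
    (hne : ∀ e ∈ E, La e ≠ 0)
    (hPP : ∀ e ∈ E,
      (lin d (La e)) ^ ((E.filter (fun e' => ∃ c : ℝ, c ≠ 0 ∧ La e' = c • La e)).card) ∣ P) :
    (∏ e ∈ E, lin d (La e)) ∣ P := by
  classical
  suffices H : ∀ (n : ℕ) (E' : Finset ι), E'.card ≤ n → E' ⊆ E →
      (∏ e ∈ E', lin d (La e)) ∣ P from H E.card E le_rfl (Finset.Subset.refl E)
  intro n
  induction n with
  | zero =>
      intro E' hc _
      have : E' = ∅ := Finset.card_eq_zero.1 (Nat.le_zero.1 hc)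
      simp [this]
  | succ n ih =>
      intro E' hc hsub
      rcases E'.eq_empty_or_nonempty with rfl | ⟨e₀, he₀⟩
      · simp
      have haE : e₀ ∈ E := hsub he₀
      have ha : La e₀ ≠ 0 := hne e₀ haE
      set Cls : Finset ι := E'.filter (fun e => ∃ c : ℝ, c ≠ 0 ∧ La e = c • La e₀) with hCls
      have he₀C : e₀ ∈ Cls := by
        rw [hCls, Finset.mem_filter]
        exact ⟨he₀, 1, one_ne_zero, (one_smul ℝ _).symm⟩
      set rest : Finset ι := E' \ Cls with hrest
      have hrsub : rest ⊆ E' := Finset.sdiff_subset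
      have hrcard : rest.card ≤ n := by
        have h1 : Cls.card ≤ E'.card := Finset.card_le_card (Finset.filter_subset _ _)
        have h2 : rest.card = E'.card - Cls.card :=
          Finset.card_sdiff_of_subset (Finset.filter_subset _ _)
        have h3 : 1 ≤ Cls.card := Finset.card_pos.2 ⟨e₀, he₀C⟩
        omega
      obtain ⟨P₁, hP₁⟩ := ih rest hrcard (hrsub.trans hsub)
      have hprime : Prime (lin d (La e₀)) := prime_lin ha
      have hnd : ¬ (lin d (La e₀)) ∣ ∏ e ∈ rest, lin d (La e) := by
        intro hdvd
        obtain ⟨e, he, hdvd'⟩ := (hprime.dvd_finset_prod_iff _).1 hdvd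
        obtain ⟨c, hc⟩ := prop_of_lin_dvd_lin ha hdvd'
        have hc0 : c ≠ 0 := by
          intro h0
          exact hne e (hsub (hrsub he)) (by rw [hc, h0, zero_smul])
        have : e ∈ Cls := by
          rw [hCls, Finset.mem_filter]
          exact ⟨hrsub he, c, hc0, hc⟩
        exact (Finset.mem_sdiff.1 he).2 this
      have hpow : (lin d (La e₀)) ^ Cls.card ∣ P := by
        refine dvd_trans (pow_dvd_pow _ ?_) (hPP e₀ haE)
        exact Finset.card_le_card (Finset.filter_subset_filter _ hsub)
      have hpow1 : (lin d (La e₀)) ^ Cls.card ∣ P₁ :=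
        hprime.pow_dvd_of_dvd_mul_left _ hnd (hP₁ ▸ hpow)
      have hassoc : Associated (∏ e ∈ Cls, lin d (La e)) ((lin d (La e₀)) ^ Cls.card) := by
        rw [← Finset.prod_const]
        apply Associated.prod
        intro e he
        obtain ⟨-, c, hc0, hc⟩ := Finset.mem_filter.1 he
        rw [hc, lin_smul]
        have hu : IsUnit (C c : MvPolynomial (Fin d) ℝ) :=
          isUnit_iff_exists_inv.2 ⟨C c⁻¹, by rw [← map_mul, mul_inv_cancel₀ hc0, map_one]⟩
        exact associated_unit_mul_left _ _ hu
      have hClsdvd : (∏ e ∈ Cls, lin d (La e)) ∣ P₁ :=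
        (hassoc.dvd_iff_dvd_left).2 hpow1
      have hsplit : (∏ e ∈ rest, lin d (La e)) * (∏ e ∈ Cls, lin d (La e))
          = ∏ e ∈ E', lin d (La e) :=
        Finset.prod_sdiff (Finset.filter_subset _ _)
      rw [← hsplit, hP₁]
      exact mul_dvd_mul_left _ hClsdvd

end StmtAux

namespace StmtAux

attribute [local instance] Classical.propDecidable

lemma perPrime (d N : ℕ) (hd : 1 ≤ d)
    (Δd : Finset (Finset (Fin N))) (hcard : ∀ σ ∈ Δd, σ.card = d)
    (v : Fin N → Fin d → ℝ)
    (hbasis : ∀ σ ∈ Δd, LinearIndependent ℝ (fun k : {x : Fin N // x ∈ σ} => v k) ∧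
      Submodule.span ℝ (v '' ↑σ) = ⊤)
    (L : Finset (Fin N) → Fin N → Fin d → ℝ)
    (hdual : ∀ σ ∈ Δd, ∀ i ∈ σ, ∀ k ∈ σ,
      (∑ j, L σ i j * v k j) = if i = k then 1 else 0)
    (f : Finset (Fin N) → MvPolynomial (Fin d) ℝ)
    (hcompat : ∀ σ ∈ Δd, ∀ σ' ∈ Δd, ∀ τ : Finset (Fin N), τ.card + 1 = d →
      τ ⊆ σ → τ ⊆ σ' → ∀ x : Fin d → ℝ, x ∈ Submodule.span ℝ (v '' ↑τ) →
        eval x (f σ - f σ') = 0)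
    (w : Finset (Fin N) → ℝ)
    (hbal : ∀ τ : Finset (Fin N), τ.card + 1 = d → (∃ σ ∈ Δd, τ ⊆ σ) →
      (∑ σ ∈ Δd.filter (fun σ => τ ⊆ σ), w σ • ∑ k ∈ σ \ τ, v k)
        ∈ Submodule.span ℝ (v '' ↑τ))
    (σ₀ : Finset (Fin N)) (hσ₀ : σ₀ ∈ Δd) (i₀ : Fin N) (hi₀ : i₀ ∈ σ₀) :
    (lin d (L σ₀ i₀)) ^ (((Δd.biUnion (fun σ => σ.image fun i => (σ, i))).filter
        (fun e : Finset (Fin N) × Fin N => ∃ c : ℝ, c ≠ 0 ∧ L e.1 e.2 = c • L σ₀ i₀)).card)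
      ∣ ∑ σ ∈ Δd, C (w σ) * f σ * ∏ σ' ∈ Δd.erase σ, chiPoly d N L σ' := by
  classical
  set a := L σ₀ i₀ with hadef
  have hsmulsum : ∀ (c : ℝ) (b y : Fin d → ℝ), ∑ j, (c • b) j * y j = c * ∑ j, b j * y j := by
    intro c b y
    rw [Finset.mul_sum]
    exact Finset.sum_congr rfl fun j _ => by simp; ring
  have hLne : ∀ σ ∈ Δd, ∀ i ∈ σ, L σ i ≠ 0 := by
    intro σ hσ i hi h0
    have := hdual σ hσ i hi i hi
    rw [if_pos rfl] at this
    simp [h0] at this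
  have ha : a ≠ 0 := hadef ▸ hLne σ₀ hσ₀ i₀ hi₀
  set S1 := Δd.filter (fun σ => ∃ i ∈ σ, ∃ c : ℝ, c ≠ 0 ∧ L σ i = c • a) with hS1
  have hS1sub : S1 ⊆ Δd := Finset.filter_subset _ _
  have huniq : ∀ σ ∈ Δd, ∀ i ∈ σ, ∀ i' ∈ σ, (∃ c : ℝ, c ≠ 0 ∧ L σ i = c • a) →
      (∃ c : ℝ, c ≠ 0 ∧ L σ i' = c • a) → i = i' := by
    rintro σ hσ i hi i' hi' ⟨c, hc0, hc⟩ ⟨c', hc'0, hc'⟩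
    by_contra hne
    have h1 := hdual σ hσ i hi i' hi'
    have h2 := hdual σ hσ i' hi' i' hi'
    rw [if_neg hne] at h1
    rw [if_pos rfl] at h2
    rw [hc, hsmulsum] at h1
    rw [hc', hsmulsum] at h2
    have hz : ∑ j, a j * v i' j = 0 := by
      rcases mul_eq_zero.1 h1 with h | h
      · exact absurd h hc0
      · exact h
    rw [hz, mul_zero] at h2
    exact one_ne_zero h2.symm
  have hEx : ∀ σ : Finset (Fin N), ∃ ic : Fin N × ℝ,
      σ ∈ S1 → ic.1 ∈ σ ∧ ic.2 ≠ 0 ∧ L σ ic.1 = ic.2 • a := by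
    intro σ
    by_cases hσ : σ ∈ S1
    · rw [hS1, Finset.mem_filter] at hσ
      obtain ⟨hσΔ, i, hi, c, hc0, hc⟩ := hσ
      exact ⟨(i, c), fun _ => ⟨hi, hc0, hc⟩⟩
    · exact ⟨(i₀, 1), fun h => absurd h hσ⟩
  choose ic hic using hEx
  have hiOf : ∀ σ ∈ S1, (ic σ).1 ∈ σ := fun σ h => (hic σ h).1
  have hcOf0 : ∀ σ ∈ S1, (ic σ).2 ≠ 0 := fun σ h => (hic σ h).2.1
  have hLiOf : ∀ σ ∈ S1, L σ (ic σ).1 = (ic σ).2 • a := fun σ h => (hic σ h).2.2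
  have hσ₀S1 : σ₀ ∈ S1 := by
    rw [hS1, Finset.mem_filter]
    exact ⟨hσ₀, i₀, hi₀, 1, one_ne_zero, (one_smul ℝ a).symm ▸ hadef ▸ rfl⟩
  have hEmem : ∀ e : Finset (Fin N) × Fin N,
      e ∈ Δd.biUnion (fun σ => σ.image fun i => (σ, i)) ↔ e.1 ∈ Δd ∧ e.2 ∈ e.1 := by
    intro e
    simp only [Finset.mem_biUnion, Finset.mem_image]
    constructor
    · rintro ⟨σ, hσ, i, hi, rfl⟩
      exact ⟨hσ, hi⟩
    · rintro ⟨h1, h2⟩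
      exact ⟨e.1, h1, e.2, h2, rfl⟩
  have hcardeq : ((Δd.biUnion (fun σ => σ.image fun i => (σ, i))).filter
      (fun e : Finset (Fin N) × Fin N => ∃ c : ℝ, c ≠ 0 ∧ L e.1 e.2 = c • a)).card
        = S1.card := by
    apply Finset.card_bij (fun e _ => e.1)
    · intro e he
      obtain ⟨heE, hprp⟩ := Finset.mem_filter.1 he
      obtain ⟨h1, h2⟩ := (hEmem e).1 heE
      rw [hS1, Finset.mem_filter]
      exact ⟨h1, e.2, h2, hprp⟩
    · intro e he e' he' heq
      obtain ⟨heE, hprp⟩ := Finset.mem_filter.1 he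
      obtain ⟨h1, h2⟩ := (hEmem e).1 heE
      obtain ⟨heE', hprp'⟩ := Finset.mem_filter.1 he'
      obtain ⟨h1', h2'⟩ := (hEmem e').1 heE'
      have : e.2 = e'.2 := huniq e.1 h1 e.2 h2 e'.2 (heq ▸ h2') hprp (by rw [heq]; exact hprp')
      exact Prod.ext heq this
    · intro σ hσ
      refine ⟨(σ, (ic σ).1), ?_, rfl⟩
      rw [Finset.mem_filter]
      constructor
      · rw [hEmem]
        exact ⟨hS1sub hσ, hiOf σ hσ⟩
      · exact ⟨(ic σ).2, hcOf0 σ hσ, hLiOf σ hσ⟩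
  rw [hcardeq]
  have hτcard : ∀ σ ∈ S1, (σ.erase (ic σ).1).card + 1 = d := by
    intro σ hσ
    rw [Finset.card_erase_of_mem (hiOf σ hσ), hcard σ (hS1sub hσ)]
    omega
  have hker : ∀ σ ∈ S1,
      Submodule.span ℝ (v '' ↑(σ.erase (ic σ).1)) = LinearMap.ker (dotMap a) := by
    intro σ hσ
    apply ker_dotMap_eq_span a ha v (σ.erase (ic σ).1)
    · exact (hbasis σ (hS1sub hσ)).1.comp
        (fun x : {x : Fin N // x ∈ σ.erase (ic σ).1} =>
          (⟨x.1, Finset.mem_of_mem_erase x.2⟩ : {x : Fin N // x ∈ σ}))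
        (fun x y hxy => Subtype.ext (by simpa using congrArg Subtype.val hxy))
    · exact hτcard σ hσ
    · intro k hk
      have hkσ : k ∈ σ := Finset.mem_of_mem_erase hk
      have hne : (ic σ).1 ≠ k := fun h => (Finset.ne_of_mem_erase hk) h.symm
      have h0 := hdual σ (hS1sub hσ) (ic σ).1 (hiOf σ hσ) k hkσ
      rw [if_neg hne, hLiOf σ hσ, hsmulsum] at h0
      rcases mul_eq_zero.1 h0 with h | h
      · exact absurd h (hcOf0 σ hσ)
      · rw [dotMap_apply]; exact h
  have hKS : ∀ σ ∈ S1, ∀ σ' ∈ Δd, σ.erase (ic σ).1 ⊆ σ' →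
      σ' ∈ S1 ∧ σ'.erase (ic σ').1 = σ.erase (ic σ).1 := by
    intro σ hσ σ' hσ' hsubτ
    have hτc : (σ.erase (ic σ).1).card + 1 = d := hτcard σ hσ
    have hvd : (σ' \ σ.erase (ic σ).1).card = 1 := by
      rw [Finset.card_sdiff_of_subset hsubτ, hcard σ' hσ']
      omega
    obtain ⟨i', hi'⟩ := Finset.card_eq_one.1 hvd
    have hi'mem := hi' ▸ Finset.mem_singleton_self i'
    have hi'σ' : i' ∈ σ' := (Finset.mem_sdiff.1 hi'mem).1
    have hi'τ : i' ∉ σ.erase (ic σ).1 := (Finset.mem_sdiff.1 hi'mem).2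
    have hvan : ∀ k ∈ σ.erase (ic σ).1, ∑ j, L σ' i' j * v k j = 0 := by
      intro k hk
      have hne : i' ≠ k := fun h => hi'τ (h ▸ hk)
      have := hdual σ' hσ' i' hi'σ' k (hsubτ hk)
      rwa [if_neg hne] at this
    have hvan2 : ∀ x : Fin d → ℝ, ∑ j, a j * x j = 0 → ∑ j, L σ' i' j * x j = 0 := by
      intro x hx
      have hxspan : x ∈ Submodule.span ℝ (v '' ↑(σ.erase (ic σ).1)) := by
        rw [hker σ hσ]
        exact LinearMap.mem_ker.2 hx
      have h0 : Set.EqOn (dotMap (L σ' i')) (0 : (Fin d → ℝ) →ₗ[ℝ] ℝ)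
          (v '' ↑(σ.erase (ic σ).1)) := by
        rintro y ⟨k, hk, rfl⟩
        simp only [LinearMap.zero_apply, dotMap_apply]
        exact hvan k hk
      have := LinearMap.eqOn_span h0 hxspan
      simpa [dotMap_apply] using this
    obtain ⟨j₀, hj₀'⟩ := Function.ne_iff.1 ha
    have hj₀ : a j₀ ≠ 0 := by simpa using hj₀'
    obtain ⟨c, hc⟩ := exists_smul_of_ker_le hj₀ hvan2
    have hc0 : c ≠ 0 := by
      intro h0
      exact hLne σ' hσ' i' hi'σ' (by rw [hc, h0, zero_smul])
    have hσ'S1 : σ' ∈ S1 := by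
      rw [hS1, Finset.mem_filter]
      exact ⟨hσ', i', hi'σ', c, hc0, hc⟩
    have hiOfeq : (ic σ').1 = i' :=
      huniq σ' hσ' (ic σ').1 (hiOf σ' hσ'S1) i' hi'σ'
        ⟨(ic σ').2, hcOf0 σ' hσ'S1, hLiOf σ' hσ'S1⟩ ⟨c, hc0, hc⟩
    have herase : σ'.erase i' = σ.erase (ic σ).1 := by
      have hsub2 : σ.erase (ic σ).1 ⊆ σ'.erase i' := by
        intro k hk
        exact Finset.mem_erase.2 ⟨fun h => hi'τ (h ▸ hk), hsubτ hk⟩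
      refine (Finset.eq_of_subset_of_card_le hsub2 ?_).symm
      rw [Finset.card_erase_of_mem hi'σ', hcard σ' hσ']
      omega
    exact ⟨hσ'S1, by rw [hiOfeq]; exact herase⟩
  have hbiU : S1 = (S1.image (fun σ => σ.erase (ic σ).1)).biUnion
      (fun τ => Δd.filter (fun σ' => τ ⊆ σ')) := by
    ext σ'
    simp only [Finset.mem_biUnion, Finset.mem_image, Finset.mem_filter]
    constructor
    · intro hσ'
      exact ⟨σ'.erase (ic σ').1, ⟨σ', hσ', rfl⟩, hS1sub hσ', Finset.erase_subset _ _⟩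
    · rintro ⟨τ, ⟨σ, hσ, rfl⟩, hσ'Δ, hsubτ⟩
      exact (hKS σ hσ σ' hσ'Δ hsubτ).1
  have hdisj : ∀ τ ∈ S1.image (fun σ => σ.erase (ic σ).1),
      ∀ τ' ∈ S1.image (fun σ => σ.erase (ic σ).1), τ ≠ τ' →
      Disjoint (Δd.filter (fun σ' => τ ⊆ σ')) (Δd.filter (fun σ' => τ' ⊆ σ')) := by
    intro τ hτ τ' hτ' hne
    obtain ⟨σ1, hσ1, rfl⟩ := Finset.mem_image.1 hτ
    obtain ⟨σ2, hσ2, rfl⟩ := Finset.mem_image.1 hτ'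
    apply Finset.disjoint_left.2
    intro σ' h1 h2
    obtain ⟨hσ'Δ, hs1⟩ := Finset.mem_filter.1 h1
    obtain ⟨-, hs2⟩ := Finset.mem_filter.1 h2
    apply hne
    rw [← (hKS σ1 hσ1 σ' hσ'Δ hs1).2, ← (hKS σ2 hσ2 σ' hσ'Δ hs2).2]
  have hm1 : 1 ≤ S1.card := Finset.card_pos.2 ⟨σ₀, hσ₀S1⟩
  have hchi1 : ∀ σ ∈ S1, chiPoly d N L σ
      = C ((ic σ).2) * lin d a * (∏ i ∈ σ.erase (ic σ).1, lin d (L σ i)) := by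
    intro σ hσ
    rw [chiPoly, ← Finset.mul_prod_erase σ _ (hiOf σ hσ)]
    have h1 : lamPoly d N L σ (ic σ).1 = lin d (L σ (ic σ).1) := rfl
    rw [h1, hLiOf σ hσ, lin_smul]
    rfl
  have hldvd : ∀ σ ∈ S1, lin d a ∣ chiPoly d N L σ := by
    intro σ hσ
    rw [hchi1 σ hσ]
    exact ⟨C ((ic σ).2) * ∏ i ∈ σ.erase (ic σ).1, lin d (L σ i), by ring⟩
  have hA : ∀ σ ∈ Δd \ S1,
      lin d a ^ S1.card ∣ C (w σ) * f σ * ∏ σ' ∈ Δd.erase σ, chiPoly d N L σ' := by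
    intro σ hσm
    obtain ⟨hσ, hσn⟩ := Finset.mem_sdiff.1 hσm
    have hsub1 : S1 ⊆ Δd.erase σ := fun σ' h =>
      Finset.mem_erase.2 ⟨fun he => hσn (he ▸ h), hS1sub h⟩
    have h2 : lin d a ^ S1.card ∣ ∏ σ' ∈ S1, chiPoly d N L σ' := by
      rw [← Finset.prod_const]
      exact Finset.prod_dvd_prod_of_dvd _ _ hldvd
    exact ((h2.trans (Finset.prod_dvd_prod_of_subset _ _ _ hsub1)).mul_left _)
  rw [← Finset.sum_sdiff hS1sub]
  apply dvd_add
  · exact Finset.dvd_sum hA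
  · have hsumb : ∑ σ ∈ S1, C (w σ) * f σ * ∏ σ' ∈ Δd.erase σ, chiPoly d N L σ'
        = ∑ τ ∈ S1.image (fun σ => σ.erase (ic σ).1),
            ∑ σ ∈ Δd.filter (fun σ' => τ ⊆ σ'),
              C (w σ) * f σ * ∏ σ' ∈ Δd.erase σ, chiPoly d N L σ' := by
      rw [← Finset.sum_biUnion (fun τ hτ τ' hτ' hne => hdisj τ hτ τ' hτ' hne), ← hbiU]
    rw [hsumb]
    apply Finset.dvd_sum
    intro τ hτ
    obtain ⟨σT, hσT, rfl⟩ := Finset.mem_image.1 hτ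
    have hσTΔ : σT ∈ Δd := hS1sub hσT
    -- decompose the products
    have hprodsplit : ∀ σ ∈ Δd.filter (fun σ' => σT.erase (ic σT).1 ⊆ σ'),
        ∏ σ' ∈ Δd.erase σ, chiPoly d N L σ'
          = lin d a ^ (S1.card - 1) *
            (C (∏ σ' ∈ S1.erase σ, (ic σ').2) *
              ((∏ σ' ∈ S1.erase σ, ∏ i ∈ σ'.erase (ic σ').1, lin d (L σ' i)) *
                ∏ σ' ∈ Δd \ S1, chiPoly d N L σ')) := by
      intro σ hσG
      obtain ⟨hσΔ, hsubτ⟩ := Finset.mem_filter.1 hσG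
      have hσS1 : σ ∈ S1 := (hKS σT hσT σ hσΔ hsubτ).1
      have hsplitidx : Δd.erase σ = (S1.erase σ) ∪ (Δd \ S1) := by
        ext σ'
        simp only [Finset.mem_erase, Finset.mem_union, Finset.mem_sdiff]
        constructor
        · rintro ⟨hne, hΔ⟩
          by_cases hs : σ' ∈ S1
          · exact Or.inl ⟨hne, hs⟩
          · exact Or.inr ⟨hΔ, hs⟩
        · rintro (⟨hne, hs⟩ | ⟨hΔ, hs⟩)
          · exact ⟨hne, hS1sub hs⟩
          · exact ⟨fun he => hs (he ▸ hσS1), hΔ⟩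
      have hdisj2 : Disjoint (S1.erase σ) (Δd \ S1) := by
        apply Finset.disjoint_left.2
        intro σ' h1 h2
        exact (Finset.mem_sdiff.1 h2).2 (Finset.mem_of_mem_erase h1)
      rw [hsplitidx, Finset.prod_union hdisj2,
        Finset.prod_congr rfl (fun σ' h => hchi1 σ' (Finset.mem_of_mem_erase h)),
        Finset.prod_mul_distrib, Finset.prod_mul_distrib, Finset.prod_const,
        Finset.card_erase_of_mem hσS1, ← map_prod]
      ring
    have hBsum : ∑ σ ∈ Δd.filter (fun σ' => σT.erase (ic σT).1 ⊆ σ'),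
        C (w σ) * f σ * ∏ σ' ∈ Δd.erase σ, chiPoly d N L σ'
          = lin d a ^ (S1.card - 1) *
            ∑ σ ∈ Δd.filter (fun σ' => σT.erase (ic σT).1 ⊆ σ'),
              C (w σ) * f σ *
                (C (∏ σ' ∈ S1.erase σ, (ic σ').2) *
                  ((∏ σ' ∈ S1.erase σ, ∏ i ∈ σ'.erase (ic σ').1, lin d (L σ' i)) *
                    ∏ σ' ∈ Δd \ S1, chiPoly d N L σ')) := by
      rw [Finset.mul_sum]
      apply Finset.sum_congr rfl
      intro σ hσG
      rw [hprodsplit σ hσG]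
      ring
    rw [hBsum]
    have hstep : S1.card = (S1.card - 1) + 1 := by omega
    rw [hstep, pow_succ]
    apply mul_dvd_mul_left
    -- the residue cancellation: lin d a divides the grouped sum
    apply lin_dvd_of_vanish ha
    intro x hx
    have hxspan : x ∈ Submodule.span ℝ (v '' ↑(σT.erase (ic σT).1)) := by
      rw [hker σT hσT]
      exact LinearMap.mem_ker.2 hx
    have hfeq : ∀ σ ∈ Δd.filter (fun σ' => σT.erase (ic σT).1 ⊆ σ'),
        eval x (f σ) = eval x (f σT) := by
      intro σ hσG
      obtain ⟨hσΔ, hsubτ⟩ := Finset.mem_filter.1 hσG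
      have := hcompat σ hσΔ σT hσTΔ (σT.erase (ic σT).1) (hτcard σT hσT) hsubτ
        (Finset.erase_subset _ _) x hxspan
      rw [map_sub, sub_eq_zero] at this
      exact this
    have hρeq : ∀ σ ∈ Δd.filter (fun σ' => σT.erase (ic σT).1 ⊆ σ'),
        eval x (∏ i ∈ σ.erase (ic σ).1, lin d (L σ i))
          = eval x (∏ i ∈ σT.erase (ic σT).1, lin d (L σT i)) := by
      intro σ hσG
      obtain ⟨hσΔ, hsubτ⟩ := Finset.mem_filter.1 hσG
      rw [(hKS σT hσT σ hσΔ hsubτ).2, map_prod, map_prod]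
      apply Finset.prod_congr rfl
      intro i hi
      rw [eval_lin, eval_lin]
      have hEq : Set.EqOn (dotMap (L σ i)) (dotMap (L σT i))
          (v '' ↑(σT.erase (ic σT).1)) := by
        rintro y ⟨k, hk, rfl⟩
        have hk' : k ∈ σT.erase (ic σT).1 := hk
        have hkσ : k ∈ σ := hsubτ hk'
        have hkσT : k ∈ σT := Finset.mem_of_mem_erase hk'
        have hiσ : i ∈ σ := hsubτ hi
        have hiσT : i ∈ σT := Finset.mem_of_mem_erase hi
        simp only [dotMap_apply]
        rw [hdual σ hσΔ i hiσ k hkσ, hdual σT hσTΔ i hiσT k hkσT]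
      have := LinearMap.eqOn_span hEq hxspan
      simpa [dotMap_apply] using this
    have hRρeq : ∀ σ ∈ Δd.filter (fun σ' => σT.erase (ic σT).1 ⊆ σ'),
        eval x (∏ σ' ∈ S1.erase σ, ∏ i ∈ σ'.erase (ic σ').1, lin d (L σ' i))
          = eval x (∏ σ' ∈ S1.erase σT, ∏ i ∈ σ'.erase (ic σ').1, lin d (L σ' i)) := by
      intro σ hσG
      obtain ⟨hσΔ, hsubτ⟩ := Finset.mem_filter.1 hσG
      have hσS1 : σ ∈ S1 := (hKS σT hσT σ hσΔ hsubτ).1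
      rw [map_prod, map_prod]
      exact prod_erase_eq_of_eq hσS1 hσT (hρeq σ hσG)
    have hceq : ∑ σ ∈ Δd.filter (fun σ' => σT.erase (ic σT).1 ⊆ σ'),
        w σ * ∏ σ' ∈ S1.erase σ, (ic σ').2 = 0 := by
      have hbal' := hbal (σT.erase (ic σT).1) (hτcard σT hσT)
        ⟨σT, hσTΔ, Finset.erase_subset _ _⟩
      have hu0 : dotMap a (∑ σ ∈ Δd.filter (fun σ' => σT.erase (ic σT).1 ⊆ σ'),
          w σ • ∑ k ∈ σ \ σT.erase (ic σT).1, v k) = 0 := by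
        rw [hker σT hσT] at hbal'
        exact LinearMap.mem_ker.1 hbal'
      rw [map_sum] at hu0
      have hterm0 : ∀ σ ∈ Δd.filter (fun σ' => σT.erase (ic σT).1 ⊆ σ'),
          dotMap a (w σ • ∑ k ∈ σ \ σT.erase (ic σT).1, v k)
            = w σ * ((ic σ).2)⁻¹ := by
        intro σ hσG
        obtain ⟨hσΔ, hsubτ⟩ := Finset.mem_filter.1 hσG
        obtain ⟨hσS1, heq⟩ := hKS σT hσT σ hσΔ hsubτ
        have hsdiff : σ \ σT.erase (ic σT).1 = {(ic σ).1} := by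
          ext k
          simp only [Finset.mem_sdiff, Finset.mem_singleton, ← heq, Finset.mem_erase]
          constructor
          · rintro ⟨hkσ, hkn⟩
            by_contra hne
            exact hkn ⟨hne, hkσ⟩
          · rintro rfl
            exact ⟨hiOf σ hσS1, fun hcon => hcon.1 rfl⟩
        rw [hsdiff, Finset.sum_singleton, map_smul, smul_eq_mul]
        congr 1
        have h1 := hdual σ hσΔ (ic σ).1 (hiOf σ hσS1) (ic σ).1 (hiOf σ hσS1)
        rw [if_pos rfl, hLiOf σ hσS1, hsmulsum] at h1
        rw [dotMap_apply]
        exact eq_inv_of_mul_eq_one_right h1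
      rw [Finset.sum_congr rfl hterm0] at hu0
      have hccσ : ∀ σ ∈ Δd.filter (fun σ' => σT.erase (ic σT).1 ⊆ σ'),
          w σ * ∏ σ' ∈ S1.erase σ, (ic σ').2
            = (∏ σ' ∈ S1, (ic σ').2) * (w σ * ((ic σ).2)⁻¹) := by
        intro σ hσG
        obtain ⟨hσΔ, hsubτ⟩ := Finset.mem_filter.1 hσG
        have hσS1 : σ ∈ S1 := (hKS σT hσT σ hσΔ hsubτ).1
        rw [← Finset.mul_prod_erase S1 _ hσS1]
        field_simp [hcOf0 σ hσS1]
      rw [Finset.sum_congr rfl hccσ, ← Finset.mul_sum, hu0, mul_zero]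
    rw [map_sum]
    have hterm : ∀ σ ∈ Δd.filter (fun σ' => σT.erase (ic σT).1 ⊆ σ'),
        eval x (C (w σ) * f σ *
          (C (∏ σ' ∈ S1.erase σ, (ic σ').2) *
            ((∏ σ' ∈ S1.erase σ, ∏ i ∈ σ'.erase (ic σ').1, lin d (L σ' i)) *
              ∏ σ' ∈ Δd \ S1, chiPoly d N L σ')))
          = (w σ * ∏ σ' ∈ S1.erase σ, (ic σ').2) *
            (eval x (f σT) *
              (eval x (∏ σ' ∈ S1.erase σT, ∏ i ∈ σ'.erase (ic σ').1, lin d (L σ' i)) *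
                eval x (∏ σ' ∈ Δd \ S1, chiPoly d N L σ'))) := by
      intro σ hσG
      rw [map_mul, map_mul, map_mul, map_mul, eval_C, eval_C, hfeq σ hσG, hRρeq σ hσG]
      ring
    rw [Finset.sum_congr rfl hterm, ← Finset.sum_mul, hceq, zero_mul]


end StmtAux


open StmtAux in
/-- if the weight `w` is balanced and the family `(f_σ)` is compatible
along common `(d−1)`-element subsets, then `Σ_σ w_σ f_σ/χ_σ` is a polynomial. -/
theorem stmt1 (d N : ℕ) (hd : 1 ≤ d) (hN : 1 ≤ N)
    (Δd : Finset (Finset (Fin N))) (hcard : ∀ σ ∈ Δd, σ.card = d)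
    (v : Fin N → Fin d → ℝ)
    (hbasis : ∀ σ ∈ Δd, LinearIndependent ℝ (fun k : {x : Fin N // x ∈ σ} => v k) ∧
      Submodule.span ℝ (v '' ↑σ) = ⊤)
    (L : Finset (Fin N) → Fin N → Fin d → ℝ)
    (hdual : ∀ σ ∈ Δd, ∀ i ∈ σ, ∀ k ∈ σ,
      (∑ j, L σ i j * v k j) = if i = k then 1 else 0)
    (f : Finset (Fin N) → MvPolynomial (Fin d) ℝ)
    (hcompat : ∀ σ ∈ Δd, ∀ σ' ∈ Δd, ∀ τ : Finset (Fin N), τ.card + 1 = d →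
      τ ⊆ σ → τ ⊆ σ' → ∀ x : Fin d → ℝ, x ∈ Submodule.span ℝ (v '' ↑τ) →
        eval x (f σ - f σ') = 0)
    (w : Finset (Fin N) → ℝ)
    (hbal : ∀ τ : Finset (Fin N), τ.card + 1 = d → (∃ σ ∈ Δd, τ ⊆ σ) →
      (∑ σ ∈ Δd.filter (fun σ => τ ⊆ σ), w σ • ∑ k ∈ σ \ τ, v k)
        ∈ Submodule.span ℝ (v '' ↑τ)) :
    ∃ p : MvPolynomial (Fin d) ℝ,
      ∑ σ ∈ Δd,
          algebraMap (MvPolynomial (Fin d) ℝ) (FractionRing (MvPolynomial (Fin d) ℝ))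
              (C (w σ) * f σ) /
            algebraMap (MvPolynomial (Fin d) ℝ) (FractionRing (MvPolynomial (Fin d) ℝ))
              (chiPoly d N L σ)
        = algebraMap (MvPolynomial (Fin d) ℝ) (FractionRing (MvPolynomial (Fin d) ℝ)) p := by
  classical
  set φ : MvPolynomial (Fin d) ℝ →+* FractionRing (MvPolynomial (Fin d) ℝ) :=
    (algebraMap (MvPolynomial (Fin d) ℝ) (FractionRing (MvPolynomial (Fin d) ℝ)) :
      MvPolynomial (Fin d) ℝ →+* FractionRing (MvPolynomial (Fin d) ℝ)) with hφdef
  have hφinj : Function.Injective φ :=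
    IsFractionRing.injective (MvPolynomial (Fin d) ℝ) (FractionRing (MvPolynomial (Fin d) ℝ))
  have hφne : ∀ {q : MvPolynomial (Fin d) ℝ}, q ≠ 0 → φ q ≠ 0 := by
    intro q hq hz
    exact hq (hφinj (by rw [hz, map_zero]))
  have hLne : ∀ σ ∈ Δd, ∀ i ∈ σ, L σ i ≠ 0 := by
    intro σ hσ i hi h0
    have := hdual σ hσ i hi i hi
    rw [if_pos rfl] at this
    simp [h0] at this
  have hchine : ∀ σ ∈ Δd, chiPoly d N L σ ≠ 0 := by
    intro σ hσ
    rw [chiPoly]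
    rw [Finset.prod_ne_zero_iff]
    intro i hi h0
    exact hLne σ hσ i hi (lin_eq_zero _ h0)
  set P : MvPolynomial (Fin d) ℝ := ∑ σ ∈ Δd, C (w σ) * f σ * ∏ σ' ∈ Δd.erase σ, chiPoly d N L σ' with hP
  set Q : MvPolynomial (Fin d) ℝ := ∏ σ ∈ Δd, chiPoly d N L σ with hQ
  have hQ0 : Q ≠ 0 := by
    rw [hQ, Finset.prod_ne_zero_iff]
    exact hchine
  have hQP : Q ∣ P := by
    set E : Finset (Finset (Fin N) × Fin N) :=
      Δd.biUnion (fun σ => σ.image fun i => (σ, i)) with hE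
    have hEmem : ∀ e : Finset (Fin N) × Fin N, e ∈ E ↔ e.1 ∈ Δd ∧ e.2 ∈ e.1 := by
      intro e
      rw [hE]
      simp only [Finset.mem_biUnion, Finset.mem_image]
      constructor
      · rintro ⟨σ, hσ, i, hi, rfl⟩
        exact ⟨hσ, hi⟩
      · rintro ⟨h1, h2⟩
        exact ⟨e.1, h1, e.2, h2, rfl⟩
    have hQE : Q = ∏ e ∈ E, lin d (L e.1 e.2) := by
      rw [hQ, hE, Finset.prod_biUnion]
      · apply Finset.prod_congr rfl
        intro σ hσ
        rw [Finset.prod_image (fun i _ i' _ h => congrArg Prod.snd h)]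
        rfl
      · intro σ hσ σ' hσ' hne
        apply Finset.disjoint_left.2
        intro e he he'
        obtain ⟨i, -, rfl⟩ := Finset.mem_image.1 he
        obtain ⟨i', -, h⟩ := Finset.mem_image.1 he'
        exact hne (congrArg Prod.fst h).symm
    rw [hQE]
    apply combine P E (fun e : Finset (Fin N) × Fin N => L e.1 e.2)
    · intro e he
      obtain ⟨h1, h2⟩ := (hEmem e).1 he
      exact hLne _ h1 _ h2
    · intro e he
      obtain ⟨h1, h2⟩ := (hEmem e).1 he
      exact perPrime d N hd Δd hcard v hbasis L hdual f hcompat w hbal e.1 h1 e.2 h2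
  obtain ⟨p, hp⟩ := hQP
  refine ⟨p, ?_⟩
  have hmain : (∑ σ ∈ Δd, φ (C (w σ) * f σ) / φ (chiPoly d N L σ)) * φ Q = φ p * φ Q := by
    rw [Finset.sum_mul]
    have hterm : ∀ σ ∈ Δd,
        φ (C (w σ) * f σ) / φ (chiPoly d N L σ) * φ Q
          = φ (C (w σ) * f σ * ∏ σ' ∈ Δd.erase σ, chiPoly d N L σ') := by
      intro σ hσ
      have hQfac : Q = chiPoly d N L σ * ∏ σ' ∈ Δd.erase σ, chiPoly d N L σ' :=
        (Finset.mul_prod_erase Δd _ hσ).symm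
      rw [hQfac, map_mul, map_mul, map_mul]
      have hB := hφne (hchine σ hσ)
      field_simp
      rw [map_mul]; ring
    rw [Finset.sum_congr rfl hterm, ← map_sum, ← hP, hp, map_mul, mul_comm (φ Q) (φ p)]
  exact mul_right_cancel₀ (hφne hQ0) hmain
end

section
/- Let d ≥ 1 and N ≥ 1, let Δ_d be a finite collection of d-element subsets of {1,…,N}, and let v_1,…,v_N ∈ ℝ^d be such that for each σ ∈ Δ_d the set {v_k : k ∈ σ} is a basis of ℝ^d. Let w = (w_σ)_{σ∈Δ_d} be balanced, let f ∈ ℝ[∂_1,…,∂_N] be homogeneous of degree d, and let v_0 ∈ ℝ^d be such that X_i^σ := λ_{σ,i}(v_0) ≠ 0 for every σ ∈ Δ_d and i ∈ σ. Then the rational function Σ_{σ∈Δ_d} w_σ · f_σ/χ_σ is a constant polynomial, and its value equals Σ_{σ∈Δ_d} w_σ · f(X^σ) / ∏_{i∈σ} X_i^σ, where f(X^σ) denotes the real number obtained from f by substituting X_i^σ for ∂_i when i ∈ σ and 0 for ∂_i when i ∉ σ. -/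
open MvPolynomial

/-- `f_σ ∈ ℝ[t_1,…,t_d]`: the result of substituting `λ_{σ,i}` for `∂_i` (`i ∈ σ`)
and `0` for `∂_i` (`i ∉ σ`) in `f ∈ ℝ[∂_1,…,∂_N]`. -/
noncomputable def fSigma (d N : ℕ) [DecidableEq (Fin N)]
    (L : Finset (Fin N) → Fin N → Fin d → ℝ)
    (f : MvPolynomial (Fin N) ℝ) (σ : Finset (Fin N)) : MvPolynomial (Fin d) ℝ :=
  aeval (fun i : Fin N => if i ∈ σ then lamPoly d N L σ i else 0) f

namespace Stmt2Aux

theorem strip_pow {R : Type*} [CommMonoidWithZero R] [IsCancelMulZero R] {p x : R} (hp : Prime p)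
    (hx : ¬ p ∣ x) : ∀ (m : ℕ) (y : R), p ^ m ∣ x * y → p ^ m ∣ y := by
  intro m
  induction m with
  | zero => simp
  | succ n ih =>
    intro y h
    have h1 : p ∣ x * y := dvd_trans (dvd_pow_self p (Nat.succ_ne_zero n)) h
    have h2 : p ∣ y := (hp.dvd_mul.mp h1).resolve_left hx
    obtain ⟨y', rfl⟩ := h2
    obtain ⟨t, ht⟩ := h
    have hxy : x * y' = p ^ n * t := by
      have : p * (x * y') = p * (p ^ n * t) := by
        calc p * (x * y') = x * (p * y') := by rw [mul_left_comm]
        _ = p ^ (n + 1) * t := ht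
        _ = p * (p ^ n * t) := by rw [pow_succ', mul_assoc]
      exact mul_left_cancel₀ hp.ne_zero this
    have : p ^ n ∣ y' := ih y' ⟨t, hxy⟩
    rw [pow_succ']
    exact mul_dvd_mul_left p this

theorem prod_dvd_of_classes {R : Type*} [CommMonoidWithZero R] [IsCancelMulZero R] {ι : Type*}
    [DecidableEq ι] (P : R) (K : Finset ι) (p : ι → R)
    (hp : ∀ k ∈ K, Prime (p k))
    (hdvd : ∀ k ∈ K, ∀ E ⊆ K, (∀ e ∈ E, Associated (p e) (p k)) → p k ^ E.card ∣ P) :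
    ∏ k ∈ K, p k ∣ P := by
  classical
  induction K using Finset.strongInduction with
  | _ K ih =>
    rcases K.eq_empty_or_nonempty with rfl | ⟨k₀, hk₀⟩
    · simpa using one_dvd P
    · set E := K.filter (fun k => Associated (p k) (p k₀)) with hE
      have hk₀E : k₀ ∈ E := Finset.mem_filter.mpr ⟨hk₀, Associated.refl _⟩
      have hEK : E ⊆ K := Finset.filter_subset _ _
      have hassoc : Associated (∏ k ∈ E, p k) (p k₀ ^ E.card) := by
        rw [← Finset.prod_const]
        exact Associated.prod _ _ _ (fun k hk => (Finset.mem_filter.mp hk).2)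
      have hEP : p k₀ ^ E.card ∣ P :=
        hdvd k₀ hk₀ E hEK (fun e he => (Finset.mem_filter.mp he).2)
      have hKE : ∏ k ∈ K \ E, p k ∣ P := by
        apply ih (K \ E)
        · exact Finset.sdiff_ssubset hEK ⟨k₀, hk₀E⟩
        · exact fun k hk => hp k (Finset.sdiff_subset hk)
        · intro k hk E' hE' hassoc'
          exact hdvd k (Finset.sdiff_subset hk) E' (hE'.trans Finset.sdiff_subset) hassoc'
      have hnd : ¬ p k₀ ∣ ∏ k ∈ K \ E, p k := by
        intro h
        obtain ⟨k, hk, hdv⟩ := (hp k₀ hk₀).dvd_finset_prod_iff _ |>.mp h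
        have : Associated (p k) (p k₀) :=
          ((hp k₀ hk₀).associated_of_dvd (hp k (Finset.sdiff_subset hk)) hdv).symm
        exact (Finset.mem_sdiff.mp hk).2 (Finset.mem_filter.mpr ⟨Finset.mem_sdiff.mp hk |>.1, this⟩)
      obtain ⟨y, hy⟩ := hKE
      have h1 : p k₀ ^ E.card ∣ y := strip_pow (hp k₀ hk₀) hnd _ y (hy ▸ hEP)
      have h2 : ∏ k ∈ E, p k ∣ y := hassoc.dvd.trans h1
      calc ∏ k ∈ K, p k = (∏ k ∈ K \ E, p k) * ∏ k ∈ E, p k := (Finset.prod_sdiff hEK).symm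
      _ ∣ (∏ k ∈ K \ E, p k) * y := mul_dvd_mul_left _ h2
      _ = P := hy.symm

theorem sum_div_eq {K : Type*} [Field K] {ι : Type*} [DecidableEq ι] (s : Finset ι)
    (a b : ι → K) (hb : ∀ i ∈ s, b i ≠ 0) :
    ∑ i ∈ s, a i / b i = (∑ i ∈ s, a i * ∏ j ∈ s.erase i, b j) / ∏ i ∈ s, b i := by
  have hprod : ∏ i ∈ s, b i ≠ 0 := Finset.prod_ne_zero_iff.mpr hb
  rw [eq_div_iff hprod, Finset.sum_mul]
  apply Finset.sum_congr rfl
  intro i hi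
  rw [← Finset.mul_prod_erase s b hi]
  field_simp [hb i hi]

noncomputable def linP {d : ℕ} (a : Fin d → ℝ) : MvPolynomial (Fin d) ℝ :=
  ∑ j, C (a j) * X j

theorem eval_linP {d : ℕ} (a x : Fin d → ℝ) : eval x (linP a) = ∑ j, a j * x j := by
  simp [linP]

theorem coeff_linP {d : ℕ} (a : Fin d → ℝ) (j : Fin d) :
    coeff (Finsupp.single j 1) (linP a) = a j := by
  simp only [linP, coeff_sum]
  rw [Finset.sum_eq_single j]
  · simp [coeff_C_mul, coeff_X]
  · intro i _ hij
    rw [C_mul_X_eq_monomial, coeff_monomial, if_neg]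
    intro h
    exact hij ((Finsupp.single_left_inj one_ne_zero).mp h)
  · simp

theorem linP_smul {d : ℕ} (c : ℝ) (a : Fin d → ℝ) : linP (c • a) = C c * linP a := by
  simp [linP, Finset.mul_sum, mul_assoc]

theorem linP_sub {d : ℕ} (a b : Fin d → ℝ) : linP (a - b) = linP a - linP b := by
  simp [linP, sub_mul, Finset.sum_sub_distrib]

theorem linP_ne_zero {d : ℕ} {a : Fin d → ℝ} (ha : a ≠ 0) : linP a ≠ 0 := by
  obtain ⟨j, hj⟩ : ∃ j, a j ≠ 0 := by
    by_contra h
    push_neg at h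
    exact ha (funext h)
  intro h
  apply hj
  have := coeff_linP a j
  rw [h] at this
  simpa using this.symm

theorem isHomogeneous_linP {d : ℕ} (a : Fin d → ℝ) : (linP a).IsHomogeneous 1 :=
  MvPolynomial.IsHomogeneous.sum _ _ _ (fun j _ => isHomogeneous_C_mul_X _ _)

theorem prime_X_mv {n : ℕ} (j : Fin (n + 1)) :
    Prime (X j : MvPolynomial (Fin (n + 1)) ℝ) := by
  have h0 : Prime (X (0 : Fin (n + 1)) : MvPolynomial (Fin (n + 1)) ℝ) := by
    rw [← MulEquiv.prime_iff (finSuccEquiv ℝ n).toMulEquiv]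
    have : (finSuccEquiv ℝ n).toMulEquiv (X 0) = Polynomial.X := finSuccEquiv_X_zero
    rw [this]
    exact Polynomial.prime_X
  rw [← MulEquiv.prime_iff (renameEquiv ℝ (Equiv.swap j 0)).toMulEquiv] at h0
  have h2 : (renameEquiv ℝ (Equiv.swap j 0)).toMulEquiv (X (0 : Fin (n+1)) : MvPolynomial (Fin (n+1)) ℝ) = X j := by
    have : (renameEquiv ℝ (Equiv.swap j 0)) (X (0 : Fin (n+1)) : MvPolynomial (Fin (n+1)) ℝ) = X j := by
      simp [renameEquiv_apply, rename_X, Equiv.swap_apply_right]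
    exact this
  rwa [h2] at h0

theorem prime_linP {d : ℕ} {a : Fin d → ℝ} (ha : a ≠ 0) : Prime (linP a) := by
  obtain ⟨j₀, hj₀⟩ : ∃ j, a j ≠ 0 := by
    by_contra h; push_neg at h; exact ha (funext h)
  cases d with
  | zero => exact j₀.elim0
  | succ n =>
    classical
    set g₁ : Fin (n+1) → MvPolynomial (Fin (n+1)) ℝ :=
      fun i => if i = j₀ then linP a else X i with hg₁
    set g₂ : Fin (n+1) → MvPolynomial (Fin (n+1)) ℝ :=
      fun i => if i = j₀ then
        C (a j₀)⁻¹ * (X j₀ - ∑ i' ∈ Finset.univ.erase j₀, C (a i') * X i') else X i with hg₂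
    have hsplit : (linP a : MvPolynomial (Fin (n+1)) ℝ)
        = C (a j₀) * X j₀ + ∑ i' ∈ Finset.univ.erase j₀, C (a i') * X i' := by
      rw [linP, ← Finset.add_sum_erase _ _ (Finset.mem_univ j₀)]
    have key₂ : aeval g₂ (linP a) = X j₀ := by
      rw [hsplit, map_add, map_mul, aeval_C, aeval_X, map_sum]
      have : ∀ i' ∈ Finset.univ.erase j₀,
          aeval g₂ (C (a i') * X i') = C (a i') * X i' := by
        intro i' hi'
        simp only [Finset.mem_erase] at hi'
        simp only [map_mul, aeval_C, aeval_X, algebraMap_eq, hg₂, if_neg hi'.1]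
      rw [Finset.sum_congr rfl this]
      simp only [hg₂, if_pos rfl]
      rw [algebraMap_eq, ← mul_assoc, ← C_mul, mul_inv_cancel₀ hj₀, C_1, one_mul]
      ring
    have key₁ : aeval g₁ (g₂ j₀) = X j₀ := by
      simp only [hg₂, if_pos rfl]
      rw [map_mul, aeval_C, map_sub, aeval_X, map_sum]
      have : ∀ i' ∈ Finset.univ.erase j₀,
          aeval g₁ (C (a i') * X i') = C (a i') * X i' := by
        intro i' hi'
        simp only [Finset.mem_erase] at hi'
        simp only [map_mul, aeval_C, aeval_X, algebraMap_eq, hg₁, if_neg hi'.1]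
      rw [Finset.sum_congr rfl this]
      simp only [hg₁, if_pos rfl]
      rw [hsplit]
      rw [algebraMap_eq]
      have : C (a j₀) * X j₀ + (∑ i' ∈ Finset.univ.erase j₀, C (a i') * X i')
          - (∑ i' ∈ Finset.univ.erase j₀, C (a i') * X i') = C (a j₀) * X j₀ := by ring
      rw [this, ← mul_assoc, ← C_mul, inv_mul_cancel₀ hj₀, C_1, one_mul]
    have hcomp₁ : (aeval g₁).comp (aeval g₂) = AlgHom.id ℝ (MvPolynomial (Fin (n+1)) ℝ) := by
      apply MvPolynomial.algHom_ext
      intro i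
      simp only [AlgHom.comp_apply, aeval_X, AlgHom.id_apply]
      by_cases hi : i = j₀
      · subst hi; exact key₁
      · simp only [hg₂, if_neg hi, aeval_X, hg₁, if_neg hi]
    have hcomp₂ : (aeval g₂).comp (aeval g₁) = AlgHom.id ℝ (MvPolynomial (Fin (n+1)) ℝ) := by
      apply MvPolynomial.algHom_ext
      intro i
      simp only [AlgHom.comp_apply, aeval_X, AlgHom.id_apply]
      by_cases hi : i = j₀
      · subst hi; simp only [hg₁, if_pos rfl]; exact key₂
      · simp only [hg₁, if_neg hi, aeval_X, hg₂, if_neg hi]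
    set e := AlgEquiv.ofAlgHom (aeval g₁) (aeval g₂) hcomp₁ hcomp₂ with he
    have hprime := (MulEquiv.prime_iff e.toMulEquiv).mpr (prime_X_mv j₀)
    have : e.toMulEquiv (X j₀) = linP a := by
      show e (X j₀) = linP a
      have h1 : e (X j₀) = aeval g₁ (X j₀) := rfl
      rw [h1, aeval_X]
      simp only [hg₁, if_pos rfl]
    rwa [this] at hprime

theorem dvd_linP {d : ℕ} {a b : Fin d → ℝ} (hb : b ≠ 0) (h : linP b ∣ linP a) :
    ∃ c : ℝ, a = c • b := by
  obtain ⟨j₀, hj₀⟩ : ∃ j, b j ≠ 0 := by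
    by_contra hh; push_neg at hh; exact hb (funext hh)
  obtain ⟨g, hg⟩ := h
  set x₀ : Fin d → ℝ := fun j => if j = j₀ then (b j₀)⁻¹ else 0 with hx₀
  have hbx₀ : ∑ j, b j * x₀ j = 1 := by
    simp [hx₀, mul_ite, Finset.sum_ite_eq', mul_inv_cancel₀ hj₀]
  set c : ℝ := ∑ j, a j * x₀ j with hc
  refine ⟨c, funext fun k => ?_⟩
  set y : Fin d → ℝ := fun j => (if j = k then 1 else 0) - b k * x₀ j with hy
  have hby : ∑ j, b j * y j = 0 := by
    simp only [hy, mul_sub, Finset.sum_sub_distrib, mul_ite, mul_one, mul_zero,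
      Finset.sum_ite_eq', Finset.mem_univ, if_pos]
    rw [show ∀ s : Finset (Fin d), ∑ j ∈ s, b j * (b k * x₀ j) = b k * ∑ j ∈ s, b j * x₀ j
      from fun s => by rw [Finset.mul_sum]; exact Finset.sum_congr rfl fun j _ => by ring]
    rw [hbx₀]; ring
  have hay : ∑ j, a j * y j = a k - b k * c := by
    simp only [hy, mul_sub, Finset.sum_sub_distrib, mul_ite, mul_one, mul_zero,
      Finset.sum_ite_eq', Finset.mem_univ, if_pos]
    rw [show ∀ s : Finset (Fin d), ∑ j ∈ s, a j * (b k * x₀ j) = b k * ∑ j ∈ s, a j * x₀ j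
      from fun s => by rw [Finset.mul_sum]; exact Finset.sum_congr rfl fun j _ => by ring]
  have := congrArg (eval y) hg
  rw [eval_linP, map_mul, eval_linP, hby, zero_mul, hay] at this
  have : a k = b k * c := by linarith
  rw [this, Pi.smul_apply, smul_eq_mul, mul_comm]

theorem homComp_of_hom {σ' R : Type*} [CommSemiring R] {p : MvPolynomial σ' R} {n : ℕ}
    (h : p.IsHomogeneous n) (m : ℕ) :
    homogeneousComponent m p = if m = n then p else 0 :=
  homogeneousComponent_of_mem ((mem_homogeneousSubmodule _ _).mpr h)

theorem hom_cancel {σ' R : Type*} [CommRing R] [IsDomain R] {p q : MvPolynomial σ' R}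
    {m n : ℕ} (hq : q ≠ 0) (hqm : q.IsHomogeneous m) (hpq : (p * q).IsHomogeneous n) :
    p.IsHomogeneous (n - m) := by
  have hcomp : ∀ k : ℕ, k + m ≠ n → homogeneousComponent k p = 0 := by
    intro k hk
    have h1 : homogeneousComponent (k + m) (p * q)
        = ∑ i ∈ Finset.range (p.totalDegree + 1), homogeneousComponent (k + m)
            ((homogeneousComponent i p) * q) := by
      conv_lhs => rw [← sum_homogeneousComponent p]
      rw [Finset.sum_mul, map_sum]
    have h2 : ∀ i ∈ Finset.range (p.totalDegree + 1),
        homogeneousComponent (k + m) ((homogeneousComponent i p) * q)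
          = if k = i then (homogeneousComponent i p) * q else 0 := by
      intro i _
      rw [homComp_of_hom ((homogeneousComponent_isHomogeneous i p).mul hqm) _]
      congr 1
      simp [add_left_inj, eq_iff_iff]
    rw [Finset.sum_congr rfl h2, Finset.sum_ite_eq, homComp_of_hom hpq, if_neg hk] at h1
    by_cases hmem : k ∈ Finset.range (p.totalDegree + 1)
    · rw [if_pos hmem] at h1
      exact (mul_eq_zero.mp h1.symm).resolve_right hq
    · exact homogeneousComponent_eq_zero _ _ (by simpa using hmem)
  have hp : p = ∑ k ∈ Finset.range (p.totalDegree + 1), homogeneousComponent k p :=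
    (sum_homogeneousComponent p).symm
  rw [hp]
  apply MvPolynomial.IsHomogeneous.sum
  intro k _
  by_cases hk : k + m = n
  · have : k = n - m := by omega
    rw [this]
    exact homogeneousComponent_isHomogeneous _ _
  · rw [hcomp k hk]
    exact isHomogeneous_zero _ _ _

theorem hom_zero_eq_C {σ' R : Type*} [CommSemiring R] {g : MvPolynomial σ' R}
    (h : g.IsHomogeneous 0) : g = C (coeff 0 g) := by
  classical
  ext m
  by_cases hm : m = 0
  · subst hm; simp
  · rw [h.coeff_eq_zero (fun hdeg => hm ((Finsupp.degree_eq_zero_iff m).mp hdeg)),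
      coeff_C, if_neg (fun hh => hm hh.symm)]

theorem pi_congr_mod {d N : ℕ} {ℓ : MvPolynomial (Fin d) ℝ}
    {g h : Fin N → MvPolynomial (Fin d) ℝ}
    (H : ∀ i, Ideal.Quotient.mk (Ideal.span {ℓ}) (g i)
      = Ideal.Quotient.mk (Ideal.span {ℓ}) (h i))
    (f : MvPolynomial (Fin N) ℝ) :
    Ideal.Quotient.mk (Ideal.span {ℓ}) (aeval g f)
      = Ideal.Quotient.mk (Ideal.span {ℓ}) (aeval h f) := by
  have key : (Ideal.Quotient.mk (Ideal.span {ℓ})).comp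
        ((aeval g : MvPolynomial (Fin N) ℝ →ₐ[ℝ] MvPolynomial (Fin d) ℝ) :
          MvPolynomial (Fin N) ℝ →+* MvPolynomial (Fin d) ℝ)
      = (Ideal.Quotient.mk (Ideal.span {ℓ})).comp
        ((aeval h : MvPolynomial (Fin N) ℝ →ₐ[ℝ] MvPolynomial (Fin d) ℝ) :
          MvPolynomial (Fin N) ℝ →+* MvPolynomial (Fin d) ℝ) := by
    apply MvPolynomial.ringHom_ext
    · intro r
      simp [aeval_C]
    · intro i
      simp only [RingHom.comp_apply, AlgHom.toRingHom_eq_coe, RingHom.coe_coe, aeval_X]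
      exact H i
  exact RingHom.congr_fun key f

noncomputable def dotLM {d : ℕ} (b : Fin d → ℝ) : (Fin d → ℝ) →ₗ[ℝ] ℝ :=
  ∑ j, b j • LinearMap.proj j

theorem dotLM_apply {d : ℕ} (b x : Fin d → ℝ) : dotLM b x = ∑ j, b j * x j := by
  simp [dotLM]

theorem eq_of_dot_eq_on_basis {d N : ℕ} {v : Fin N → Fin d → ℝ} {σ : Finset (Fin N)}
    (hspan : Submodule.span ℝ (v '' ↑σ) = ⊤) {a b : Fin d → ℝ}
    (hagree : ∀ k ∈ σ, ∑ j, a j * v k j = ∑ j, b j * v k j) : a = b := by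
  have : dotLM a = dotLM b := by
    apply LinearMap.ext_on hspan
    intro x hx
    obtain ⟨k, hk, rfl⟩ := hx
    rw [dotLM_apply, dotLM_apply]
    exact hagree k hk
  funext j
  have := congrArg (fun φ => φ (Pi.single j 1)) this
  simpa [dotLM_apply, Pi.single_apply, mul_ite, Finset.sum_ite_eq'] using this

theorem dot_vanish_on_span {d N : ℕ} {v : Fin N → Fin d → ℝ} {τ : Finset (Fin N)}
    {b : Fin d → ℝ} (hτ : ∀ k ∈ τ, ∑ j, b j * v k j = 0) {x : Fin d → ℝ}
    (hx : x ∈ Submodule.span ℝ (v '' ↑τ)) : ∑ j, b j * x j = 0 := by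
  have hsub : Submodule.span ℝ (v '' ↑τ) ≤ LinearMap.ker (dotLM b) := by
    rw [Submodule.span_le]
    rintro y ⟨k, hk, rfl⟩
    simp only [SetLike.mem_coe, LinearMap.mem_ker, dotLM_apply]
    exact hτ k hk
  have := hsub hx
  rw [LinearMap.mem_ker, dotLM_apply] at this
  exact this

theorem dot_sub {d : ℕ} (a b x : Fin d → ℝ) :
    ∑ j, (a - b) j * x j = (∑ j, a j * x j) - ∑ j, b j * x j := by
  simp [sub_mul, Finset.sum_sub_distrib]

theorem dot_smul {d : ℕ} (c : ℝ) (a x : Fin d → ℝ) :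
    ∑ j, (c • a) j * x j = c * ∑ j, a j * x j := by
  simp [Finset.mul_sum, mul_assoc]

theorem key_dvd {d N : ℕ} (hN : 1 ≤ N)
    (Δd : Finset (Finset (Fin N))) (hcard : ∀ σ ∈ Δd, σ.card = d)
    (v : Fin N → Fin d → ℝ)
    (hspan : ∀ σ ∈ Δd, Submodule.span ℝ (v '' ↑σ) = ⊤)
    (L : Finset (Fin N) → Fin N → Fin d → ℝ)
    (hdual : ∀ σ ∈ Δd, ∀ i ∈ σ, ∀ k ∈ σ,
      (∑ j, L σ i j * v k j) = if i = k then 1 else 0)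
    (w : Finset (Fin N) → ℝ)
    (hbal : ∀ τ : Finset (Fin N), τ.card + 1 = d → (∃ σ ∈ Δd, τ ⊆ σ) →
      (∑ σ ∈ Δd.filter (fun σ => τ ⊆ σ), w σ • ∑ k ∈ σ \ τ, v k)
        ∈ Submodule.span ℝ (v '' ↑τ))
    (f : MvPolynomial (Fin N) ℝ) :
    (∏ σ ∈ Δd, chiPoly d N L σ) ∣
      ∑ σ ∈ Δd, (C (w σ) * fSigma d N L f σ) * ∏ σ' ∈ Δd.erase σ, chiPoly d N L σ' := by
  classical
  set P := ∑ σ ∈ Δd, (C (w σ) * fSigma d N L f σ) * ∏ σ' ∈ Δd.erase σ, chiPoly d N L σ'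
    with hP
  have hLne : ∀ σ ∈ Δd, ∀ i ∈ σ, L σ i ≠ 0 := by
    intro σ hσ i hi h0
    have h1 := hdual σ hσ i hi i hi
    rw [if_pos rfl, h0] at h1
    simp at h1
  have hchi : ∀ σ, chiPoly d N L σ = ∏ i ∈ σ, linP (L σ i) := fun σ => rfl
  have hQ : ∏ σ ∈ Δd, chiPoly d N L σ
      = ∏ k ∈ Δd.sigma (fun σ => σ), linP (L k.1 k.2) := by
    rw [Finset.prod_sigma]
    exact Finset.prod_congr rfl (fun σ _ => hchi σ)
  rw [hQ]
  apply prod_dvd_of_classes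
  · rintro ⟨σ, i⟩ hk
    rw [Finset.mem_sigma] at hk
    exact prime_linP (hLne σ hk.1 i hk.2)
  rintro ⟨σ₀, i₀⟩ hk₀ E hEK hEassoc
  rw [Finset.mem_sigma] at hk₀
  obtain ⟨hσ₀, hi₀⟩ := hk₀
  set b := L σ₀ i₀ with hb
  set ℓ := linP b with hℓ
  have hbne : b ≠ 0 := hLne σ₀ hσ₀ i₀ hi₀
  set S := Δd.filter (fun σ => ∃ i ∈ σ, ∃ c : ℝ, c ≠ 0 ∧ L σ i = c • b) with hS
  have hSel : ∀ σ, σ ∈ S → ∃ i, i ∈ σ ∧ ∃ c : ℝ, c ≠ 0 ∧ L σ i = c • b := by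
    intro σ hσ
    obtain ⟨i, hi, c, hc⟩ := (Finset.mem_filter.mp hσ).2
    exact ⟨i, hi, (c : ℝ), hc⟩
  haveI : Inhabited (Fin N) := ⟨⟨0, hN⟩⟩
  choose! iS hiSmem cS hcSne hLcS using hSel
  have hSΔ : ∀ σ ∈ S, σ ∈ Δd := fun σ hσ => (Finset.mem_filter.mp hσ).1
  -- uniqueness of the proportional index
  have huniq : ∀ σ ∈ Δd, ∀ i ∈ σ, ∀ i' ∈ σ, ∀ c c' : ℝ, c ≠ 0 → c' ≠ 0 →
      L σ i = c • b → L σ i' = c' • b → i = i' := by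
    intro σ hσ i hi i' hi' c c' hc hc' h1 h2
    by_contra hne
    have e1 : ∑ j, L σ i j * v i' j = 0 := by
      rw [hdual σ hσ i hi i' hi', if_neg hne]
    have e2 : ∑ j, L σ i' j * v i' j = 1 := by
      rw [hdual σ hσ i' hi' i' hi', if_pos rfl]
    have e3 : ∑ j, L σ i j * v i' j = (c / c') * ∑ j, L σ i' j * v i' j := by
      rw [h1, h2, dot_smul, dot_smul]
      field_simp
    rw [e1, e2, mul_one, eq_comm, div_eq_zero_iff] at e3
    exact hc (e3.resolve_right hc')
  -- b kills v k for k in the wall of any σ ∈ S, and pairs with iS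
  have hbvk : ∀ σ ∈ S, ∀ k ∈ σ.erase (iS σ), ∑ j, b j * v k j = 0 := by
    intro σ hσ k hk
    rw [Finset.mem_erase] at hk
    have h1 : ∑ j, L σ (iS σ) j * v k j = 0 := by
      rw [hdual σ (hSΔ σ hσ) (iS σ) (hiSmem σ hσ) k hk.2, if_neg (fun h => hk.1 h.symm)]
    rw [hLcS σ hσ, dot_smul] at h1
    exact (mul_eq_zero.mp h1).resolve_left (hcSne σ hσ)
  have hbiS : ∀ σ ∈ S, cS σ * (∑ j, b j * v (iS σ) j) = 1 := by
    intro σ hσ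
    have h1 : ∑ j, L σ (iS σ) j * v (iS σ) j = 1 := by
      rw [hdual σ (hSΔ σ hσ) (iS σ) (hiSmem σ hσ) (iS σ) (hiSmem σ hσ), if_pos rfl]
    rw [hLcS σ hσ, dot_smul] at h1
    exact h1
  -- E.card ≤ S.card
  have hESmaps : ∀ k ∈ E, k.1 ∈ S ∧ ∃ c : ℝ, c ≠ 0 ∧ L k.1 k.2 = c • b := by
    rintro ⟨σ, i⟩ hkE
    have hkK := hEK hkE
    rw [Finset.mem_sigma] at hkK
    have hdvd : ℓ ∣ linP (L σ i) := (hEassoc _ hkE).symm.dvd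
    obtain ⟨c, hc⟩ := dvd_linP hbne hdvd
    have hcne : c ≠ 0 := by
      intro h0
      rw [h0, zero_smul] at hc
      exact hLne σ hkK.1 i hkK.2 hc
    exact ⟨Finset.mem_filter.mpr ⟨hkK.1, i, hkK.2, c, hcne, hc⟩, c, hcne, hc⟩
  have hcard_le : E.card ≤ S.card := by
    apply Finset.card_le_card_of_injOn (fun k => k.1)
    · intro k hk; exact (hESmaps k hk).1
    · rintro ⟨σ, i⟩ hkE ⟨σ', i'⟩ hkE' (heq : σ = σ')
      subst heq
      obtain ⟨hkS, c, hcne, hc⟩ := hESmaps _ hkE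
      obtain ⟨_, c', hcne', hc'⟩ := hESmaps _ hkE'
      have hkK := hEK hkE; have hkK' := hEK hkE'
      rw [Finset.mem_sigma] at hkK hkK'
      have := huniq σ hkK.1 i hkK.2 i' hkK'.2 c c' hcne hcne' hc hc'
      simp [this]
  have hσ₀S : σ₀ ∈ S :=
    Finset.mem_filter.mpr ⟨hσ₀, i₀, hi₀, 1, one_ne_zero, (one_smul _ _).symm⟩
  suffices hl : ℓ ^ S.card ∣ P by
    exact dvd_trans (pow_dvd_pow ℓ hcard_le) hl
  have hτcard : ∀ σ ∈ S, (σ.erase (iS σ)).card + 1 = d := by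
    intro σ hσ
    rw [Finset.card_erase_add_one (hiSmem σ hσ)]
    exact hcard σ (hSΔ σ hσ)
  -- universal proportionality: any functional vanishing on a wall is a multiple of b
  have hgen : ∀ σs ∈ S, ∀ a : Fin d → ℝ, (∀ k ∈ σs.erase (iS σs), ∑ j, a j * v k j = 0) →
      a = ((∑ j, a j * v (iS σs) j) * cS σs) • b := by
    intro σs hσs a ha
    apply eq_of_dot_eq_on_basis (hspan σs (hSΔ σs hσs))
    intro k hk
    rw [dot_smul]
    by_cases hkτ : k ∈ σs.erase (iS σs)
    · rw [ha k hkτ, hbvk σs hσs k hkτ, mul_zero]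
    · have hkiS : k = iS σs := by
        by_contra hne
        exact hkτ (Finset.mem_erase.mpr ⟨hne, hk⟩)
      subst hkiS
      rw [mul_assoc, hbiS σs hσs, mul_one]
  -- Claim 1 : fibers are exactly the balanced-condition index sets
  have hfib : ∀ σs ∈ S, S.filter (fun σ => σ.erase (iS σ) = σs.erase (iS σs))
      = Δd.filter (fun σ => σs.erase (iS σs) ⊆ σ) := by
    intro σs hσsS
    ext σ
    simp only [Finset.mem_filter]
    constructor
    · rintro ⟨hσS, hτ⟩
      exact ⟨hSΔ σ hσS, hτ ▸ Finset.erase_subset _ _⟩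
    · rintro ⟨hσΔ, hτsub⟩
      have hcards : σ.card = d := hcard σ hσΔ
      have hτc : (σs.erase (iS σs)).card + 1 = d := hτcard σs hσsS
      have hsd : (σ \ σs.erase (iS σs)).card = 1 := by
        rw [Finset.card_sdiff_of_subset hτsub]; omega
      obtain ⟨i₁, hi₁⟩ := Finset.card_eq_one.mp hsd
      have hi₁σ : i₁ ∈ σ := (Finset.mem_sdiff.mp (hi₁ ▸ Finset.mem_singleton_self i₁)).1
      have hi₁τ : i₁ ∉ σs.erase (iS σs) :=
        (Finset.mem_sdiff.mp (hi₁ ▸ Finset.mem_singleton_self i₁)).2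
      have herase : σ.erase i₁ = σs.erase (iS σs) := by
        symm
        apply Finset.eq_of_subset_of_card_le
        · intro x hx
          rw [Finset.mem_erase]
          refine ⟨?_, hτsub hx⟩
          rintro rfl
          exact hi₁τ hx
        · rw [Finset.card_erase_of_mem hi₁σ]; omega
      have hprop : L σ i₁ = ((∑ j, L σ i₁ j * v (iS σs) j) * cS σs) • b := by
        apply hgen σs hσsS
        intro k hk
        have hkσ : k ∈ σ := hτsub hk
        have hkne : i₁ ≠ k := fun h => hi₁τ (h ▸ hk)
        rw [hdual σ hσΔ i₁ hi₁σ k hkσ, if_neg hkne]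
      have hene : (∑ j, L σ i₁ j * v (iS σs) j) * cS σs ≠ 0 := by
        intro h0
        rw [h0, zero_smul] at hprop
        exact hLne σ hσΔ i₁ hi₁σ hprop
      have hσS : σ ∈ S := Finset.mem_filter.mpr ⟨hσΔ, i₁, hi₁σ, _, hene, hprop⟩
      refine ⟨hσS, ?_⟩
      have hiSeq : iS σ = i₁ := huniq σ hσΔ (iS σ) (hiSmem σ hσS) i₁ hi₁σ (cS σ) _
        (hcSne σ hσS) hene (hLcS σ hσS) hprop
      rw [hiSeq, herase]
  -- quotient machinery
  set I := Ideal.span {ℓ} with hI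
  set π := Ideal.Quotient.mk I with hπ
  have hπℓ : π ℓ = 0 := Ideal.Quotient.eq_zero_iff_mem.mpr (Ideal.subset_span rfl)
  have hπlam : ∀ σ ∈ S, π (linP (L σ (iS σ))) = 0 := by
    intro σ hσ
    rw [hLcS σ hσ, linP_smul, map_mul, hπℓ, mul_zero]
  have hπcongr : ∀ σs ∈ S, ∀ σ ∈ S, σ.erase (iS σ) = σs.erase (iS σs) →
      ∀ j ∈ σs.erase (iS σs), π (linP (L σ j)) = π (linP (L σs j)) := by
    intro σs hσs σ hσ hτeq j hj
    rw [hπ, Ideal.Quotient.eq, ← linP_sub]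
    have hjσ : j ∈ σ := Finset.erase_subset _ _ (hτeq ▸ hj)
    have hjσs : j ∈ σs := Finset.erase_subset _ _ hj
    have hδprop : L σ j - L σs j
        = ((∑ jj, (L σ j - L σs j) jj * v (iS σs) jj) * cS σs) • b := by
      apply hgen σs hσs
      intro k hk
      have hkσ : k ∈ σ := Finset.erase_subset _ _ (hτeq ▸ hk)
      have hkσs : k ∈ σs := Finset.erase_subset _ _ hk
      rw [dot_sub, hdual σ (hSΔ σ hσ) j hjσ k hkσ, hdual σs (hSΔ σs hσs) j hjσs k hkσs,
        sub_self]
    rw [hδprop, linP_smul]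
    exact Ideal.mem_span_singleton.mpr (Dvd.intro_left _ rfl)
  have hπf : ∀ σs ∈ S, ∀ σ ∈ S, σ.erase (iS σ) = σs.erase (iS σs) →
      π (fSigma d N L f σ) = π (fSigma d N L f σs) := by
    intro σs hσs σ hσ hτeq
    rw [hπ]
    apply pi_congr_mod
    intro i
    show (Ideal.Quotient.mk I) (if i ∈ σ then lamPoly d N L σ i else 0)
      = (Ideal.Quotient.mk I) (if i ∈ σs then lamPoly d N L σs i else 0)
    have hlam : ∀ σ' i', lamPoly d N L σ' i' = linP (L σ' i') := fun _ _ => rfl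
    by_cases hiτ : i ∈ σs.erase (iS σs)
    · rw [if_pos (Finset.erase_subset _ _ (hτeq ▸ hiτ) : i ∈ σ),
        if_pos (Finset.erase_subset _ _ hiτ : i ∈ σs), hlam, hlam]
      exact hπcongr σs hσs σ hσ hτeq i hiτ
    · have hz : ∀ σ', σ' ∈ S → σ'.erase (iS σ') = σs.erase (iS σs) →
          (Ideal.Quotient.mk I) (if i ∈ σ' then lamPoly d N L σ' i else 0) = 0 := by
        intro σ' hσ' hτeq'
        by_cases hiσ' : i ∈ σ'
        · have : i = iS σ' := by
            by_contra hne
            exact hiτ (hτeq' ▸ Finset.mem_erase.mpr ⟨hne, hiσ'⟩)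
          rw [if_pos hiσ', hlam, this]
          exact hπlam σ' hσ'
        · rw [if_neg hiσ', map_zero]
      rw [hz σ hσ hτeq, hz σs hσs rfl]
  -- balanced cancellation on each fiber
  have hbalS : ∀ σs ∈ S, ∑ σ ∈ S.filter (fun σ => σ.erase (iS σ) = σs.erase (iS σs)),
      w σ * ∏ σ' ∈ (S.filter (fun σ => σ.erase (iS σ) = σs.erase (iS σs))).erase σ, cS σ'
        = 0 := by
    intro σs hσs
    rw [hfib σs hσs]
    set fib := Δd.filter (fun σ => σs.erase (iS σs) ⊆ σ) with hfibd
    have hfibS : ∀ σ ∈ fib, σ ∈ S ∧ σ.erase (iS σ) = σs.erase (iS σs) := by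
      intro σ hσ
      have : σ ∈ S.filter (fun σ => σ.erase (iS σ) = σs.erase (iS σs)) :=
        (hfib σs hσs).symm ▸ hσ
      exact ⟨(Finset.mem_filter.mp this).1, (Finset.mem_filter.mp this).2⟩
    have hsdiff : ∀ σ ∈ fib, σ \ σs.erase (iS σs) = {iS σ} := by
      intro σ hσ
      obtain ⟨hσS, hτeq⟩ := hfibS σ hσ
      ext x
      rw [Finset.mem_sdiff, Finset.mem_singleton, ← hτeq]
      constructor
      · rintro ⟨hxσ, hxτ⟩
        by_contra hne
        exact hxτ (Finset.mem_erase.mpr ⟨hne, hxσ⟩)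
      · rintro rfl
        exact ⟨hiSmem σ hσS, Finset.notMem_erase _ _⟩
    have hvec := hbal (σs.erase (iS σs)) (hτcard σs hσs)
      ⟨σs, hSΔ σs hσs, Finset.erase_subset _ _⟩
    have hdot := dot_vanish_on_span (hbvk σs hσs) hvec
    have h1 : ∀ j, (∑ σ ∈ fib, w σ • ∑ k ∈ σ \ σs.erase (iS σs), v k) j
        = ∑ σ ∈ fib, w σ * v (iS σ) j := by
      intro j
      rw [Finset.sum_apply]
      apply Finset.sum_congr rfl
      intro σ hσ
      rw [hsdiff σ hσ, Finset.sum_singleton]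
      simp
    have hdot2 : ∑ σ ∈ fib, w σ * ∑ j, b j * v (iS σ) j = 0 := by
      calc ∑ σ ∈ fib, w σ * ∑ j, b j * v (iS σ) j
          = ∑ σ ∈ fib, ∑ j, b j * (w σ * v (iS σ) j) := by
            apply Finset.sum_congr rfl
            intro σ _
            rw [Finset.mul_sum]
            apply Finset.sum_congr rfl
            intro j _
            ring
        _ = ∑ j, ∑ σ ∈ fib, b j * (w σ * v (iS σ) j) := Finset.sum_comm
        _ = ∑ j, b j * ∑ σ ∈ fib, w σ * v (iS σ) j := by
            apply Finset.sum_congr rfl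
            intro j _
            rw [Finset.mul_sum]
        _ = ∑ j, b j * (∑ σ ∈ fib, w σ • ∑ k ∈ σ \ σs.erase (iS σs), v k) j := by
            apply Finset.sum_congr rfl
            intro j _
            rw [h1 j]
        _ = 0 := hdot
    have hper : ∀ σ ∈ fib, w σ * ∏ σ' ∈ fib.erase σ, cS σ'
        = (w σ * ∑ j, b j * v (iS σ) j) * ∏ σ' ∈ fib, cS σ' := by
      intro σ hσ
      obtain ⟨hσS, _⟩ := hfibS σ hσ
      rw [← Finset.mul_prod_erase fib cS hσ]
      rw [show (w σ * ∑ j, b j * v (iS σ) j) * (cS σ * ∏ σ' ∈ fib.erase σ, cS σ')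
          = w σ * ((cS σ * ∑ j, b j * v (iS σ) j) * ∏ σ' ∈ fib.erase σ, cS σ') from by ring,
        hbiS σ hσS, one_mul]
    calc ∑ σ ∈ fib, w σ * ∏ σ' ∈ fib.erase σ, cS σ'
        = ∑ σ ∈ fib, (w σ * ∑ j, b j * v (iS σ) j) * ∏ σ' ∈ fib, cS σ' :=
          Finset.sum_congr rfl hper
      _ = (∑ σ ∈ fib, w σ * ∑ j, b j * v (iS σ) j) * ∏ σ' ∈ fib, cS σ' :=
          (Finset.sum_mul _ _ _).symm
      _ = 0 := by rw [hdot2, zero_mul]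
  -- factorization of chi on S
  have hχS : ∀ σ ∈ S, chiPoly d N L σ
      = (C (cS σ) * ℓ) * ∏ j ∈ σ.erase (iS σ), linP (L σ j) := by
    intro σ hσ
    rw [hchi, ← Finset.mul_prod_erase σ _ (hiSmem σ hσ), hLcS σ hσ, linP_smul]
  have hprodS : ∀ t : Finset (Finset (Fin N)), t ⊆ S → ∏ σ' ∈ t, chiPoly d N L σ'
      = ℓ ^ t.card * ∏ σ' ∈ t, (C (cS σ') * ∏ j ∈ σ'.erase (iS σ'), linP (L σ' j)) := by
    intro t ht
    rw [Finset.prod_congr rfl (fun σ' hσ' => hχS σ' (ht hσ'))]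
    rw [Finset.prod_congr rfl (fun σ' _ =>
      show (C (cS σ') * ℓ) * ∏ j ∈ σ'.erase (iS σ'), linP (L σ' j)
        = ℓ * (C (cS σ') * ∏ j ∈ σ'.erase (iS σ'), linP (L σ' j)) from by ring)]
    rw [Finset.prod_mul_distrib, Finset.prod_const]
  -- the residue sum T and its divisibility by ℓ
  set T := ∑ σ ∈ S, (C (w σ) * fSigma d N L f σ)
      * ∏ σ' ∈ S.erase σ, (C (cS σ') * ∏ j ∈ σ'.erase (iS σ'), linP (L σ' j)) with hT
  have hℓT : ℓ ∣ T := by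
    rw [← Ideal.mem_span_singleton (α := MvPolynomial (Fin d) ℝ), ← hI,
      ← Ideal.Quotient.eq_zero_iff_mem]
    show π T = 0
    rw [hT, map_sum,
      ← Finset.sum_fiberwise_of_maps_to (g := fun σ => σ.erase (iS σ))
        (t := S.image (fun σ => σ.erase (iS σ)))
        (fun σ hσ => Finset.mem_image_of_mem _ hσ)]
    apply Finset.sum_eq_zero
    intro τ hτ
    obtain ⟨σs, hσsS, hτeq⟩ := Finset.mem_image.mp hτ
    subst hτeq
    have hfibmem : ∀ σ ∈ S.filter (fun σ => σ.erase (iS σ) = σs.erase (iS σs)),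
        σ ∈ S ∧ σ.erase (iS σ) = σs.erase (iS σs) := by
      intro σ hσ
      exact ⟨(Finset.mem_filter.mp hσ).1, (Finset.mem_filter.mp hσ).2⟩
    set ρ := π (∏ j ∈ σs.erase (iS σs), linP (L σs j)) with hρ
    set B := ∏ σ' ∈ S.filter (fun σ' => ¬ σ'.erase (iS σ') = σs.erase (iS σs)),
        π (C (cS σ') * ∏ j ∈ σ'.erase (iS σ'), linP (L σ' j)) with hB
    set fib := S.filter (fun σ => σ.erase (iS σ) = σs.erase (iS σs)) with hfb
    have hterm : ∀ σ ∈ fib, π ((C (w σ) * fSigma d N L f σ)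
        * ∏ σ' ∈ S.erase σ, (C (cS σ') * ∏ j ∈ σ'.erase (iS σ'), linP (L σ' j)))
        = (π (fSigma d N L f σs) * B * ρ ^ (fib.card - 1))
          * π (C (w σ * ∏ σ' ∈ fib.erase σ, cS σ')) := by
      intro σ hσ
      obtain ⟨hσS, hτeqσ⟩ := hfibmem σ hσ
      rw [map_mul, map_mul, map_prod,
        ← Finset.prod_filter_mul_prod_filter_not (S.erase σ)
          (fun σ' => σ'.erase (iS σ') = σs.erase (iS σs))]
      have e1 : (S.erase σ).filter (fun σ' => σ'.erase (iS σ') = σs.erase (iS σs))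
          = fib.erase σ := by
        rw [hfb, Finset.filter_erase]
      have e2 : (S.erase σ).filter (fun σ' => ¬ σ'.erase (iS σ') = σs.erase (iS σs))
          = S.filter (fun σ' => ¬ σ'.erase (iS σ') = σs.erase (iS σs)) := by
        rw [Finset.filter_erase]
        apply Finset.erase_eq_of_notMem
        intro hmem
        exact (Finset.mem_filter.mp hmem).2 hτeqσ
      rw [e1, e2]
      have e3 : ∏ σ' ∈ fib.erase σ, π (C (cS σ') * ∏ j ∈ σ'.erase (iS σ'), linP (L σ' j))
          = π (C (∏ σ' ∈ fib.erase σ, cS σ')) * ρ ^ (fib.card - 1) := by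
        have estep : ∀ σ' ∈ fib.erase σ,
            π (C (cS σ') * ∏ j ∈ σ'.erase (iS σ'), linP (L σ' j))
            = π (C (cS σ')) * ρ := by
          intro σ' hσ'
          obtain ⟨hσ'S, hτeq'⟩ := hfibmem σ' (Finset.mem_of_mem_erase hσ')
          rw [map_mul]
          congr 1
          rw [hτeq', hρ, map_prod, map_prod]
          exact Finset.prod_congr rfl (fun j hj => hπcongr σs hσsS σ' hσ'S hτeq' j hj)
        rw [Finset.prod_congr rfl estep, Finset.prod_mul_distrib, Finset.prod_const,
          Finset.card_erase_of_mem hσ, ← map_prod, ← map_prod]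
      rw [e3, hπf σs hσsS σ hσS hτeqσ, map_mul (C : ℝ →+* MvPolynomial (Fin d) ℝ), map_mul]
      ring
    rw [Finset.sum_congr rfl hterm, ← Finset.mul_sum, ← map_sum, ← map_sum,
      hbalS σs hσsS, map_zero, map_zero, mul_zero]
  -- final assembly of the power divisibility
  obtain ⟨T', hT'⟩ := hℓT
  have hm1 : 1 ≤ S.card := Finset.card_pos.mpr ⟨σ₀, hσ₀S⟩
  rw [hP, ← Finset.sum_filter_add_sum_filter_not Δd
    (fun σ => ∃ i ∈ σ, ∃ c : ℝ, c ≠ 0 ∧ L σ i = c • b), ← hS]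
  apply dvd_add
  · -- the sum over S
    set B' := ∏ σ' ∈ Δd.filter (fun σ' => ¬ ∃ i ∈ σ', ∃ c : ℝ, c ≠ 0 ∧ L σ' i = c • b),
        chiPoly d N L σ' with hB'
    have hSsplit : ∀ σ ∈ S, ∏ σ' ∈ Δd.erase σ, chiPoly d N L σ'
        = (ℓ ^ (S.card - 1) * B')
          * ∏ σ' ∈ S.erase σ, (C (cS σ') * ∏ j ∈ σ'.erase (iS σ'), linP (L σ' j)) := by
      intro σ hσ
      rw [← Finset.prod_filter_mul_prod_filter_not (Δd.erase σ)
        (fun σ' => ∃ i ∈ σ', ∃ c : ℝ, c ≠ 0 ∧ L σ' i = c • b)]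
      have e1 : (Δd.erase σ).filter (fun σ' => ∃ i ∈ σ', ∃ c : ℝ, c ≠ 0 ∧ L σ' i = c • b)
          = S.erase σ := by
        rw [hS, Finset.filter_erase]
      have e2 : (Δd.erase σ).filter (fun σ' => ¬ ∃ i ∈ σ', ∃ c : ℝ, c ≠ 0 ∧ L σ' i = c • b)
          = Δd.filter (fun σ' => ¬ ∃ i ∈ σ', ∃ c : ℝ, c ≠ 0 ∧ L σ' i = c • b) := by
        rw [Finset.filter_erase]
        apply Finset.erase_eq_of_notMem
        intro hmem
        exact (Finset.mem_filter.mp hmem).2 (Finset.mem_filter.mp hσ).2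
      rw [e1, e2, hprodS (S.erase σ) (Finset.erase_subset _ _),
        Finset.card_erase_of_mem hσ, hB']
      ring
    have hsum : ∑ σ ∈ S, (C (w σ) * fSigma d N L f σ) * ∏ σ' ∈ Δd.erase σ, chiPoly d N L σ'
        = ℓ ^ (S.card - 1) * (B' * T) := by
      rw [hT, Finset.mul_sum, Finset.mul_sum]
      apply Finset.sum_congr rfl
      intro σ hσ
      rw [hSsplit σ hσ]
      ring
    rw [hsum, hT']
    refine ⟨B' * T', ?_⟩
    have hpow : ℓ ^ S.card = ℓ ^ (S.card - 1) * ℓ := by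
      rw [← pow_succ]
      congr 1
      omega
    rw [hpow]
    ring
  · apply Finset.dvd_sum
    intro σ hσm
    have hσnS : σ ∉ S := by
      rw [hS]
      intro h
      exact (Finset.mem_filter.mp hσm).2 (Finset.mem_filter.mp h).2
    have h1 : ℓ ^ S.card ∣ ∏ σ' ∈ S, chiPoly d N L σ' := by
      rw [hprodS S (subset_refl S)]
      exact dvd_mul_right _ _
    have h2 : ∏ σ' ∈ S, chiPoly d N L σ' ∣ ∏ σ' ∈ Δd.erase σ, chiPoly d N L σ' := by
      apply Finset.prod_dvd_prod_of_subset
      intro σ' hσ'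
      exact Finset.mem_erase.mpr ⟨fun h => hσnS (h ▸ hσ'), hSΔ σ' hσ'⟩
    exact Dvd.dvd.mul_left (h1.trans h2) _

theorem hLne' {d N : ℕ} {Δd : Finset (Finset (Fin N))}
    {v : Fin N → Fin d → ℝ} {L : Finset (Fin N) → Fin N → Fin d → ℝ}
    (hdual : ∀ σ ∈ Δd, ∀ i ∈ σ, ∀ k ∈ σ,
      (∑ j, L σ i j * v k j) = if i = k then 1 else 0) :
    ∀ σ ∈ Δd, ∀ i ∈ σ, L σ i ≠ 0 := by
  intro σ hσ i hi h0
  have h1 := hdual σ hσ i hi i hi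
  rw [if_pos rfl, h0] at h1
  simp at h1

theorem chiPoly_hom {d N : ℕ} (L : Finset (Fin N) → Fin N → Fin d → ℝ)
    (σ : Finset (Fin N)) : (chiPoly d N L σ).IsHomogeneous σ.card := by
  have : (chiPoly d N L σ).IsHomogeneous (∑ _i ∈ σ, 1) :=
    MvPolynomial.IsHomogeneous.prod _ _ _ (fun i _ => isHomogeneous_linP (L σ i))
  simpa using this

theorem fSigma_hom {d N : ℕ} (L : Finset (Fin N) → Fin N → Fin d → ℝ)
    (f : MvPolynomial (Fin N) ℝ) (σ : Finset (Fin N)) {n : ℕ} (hf : f.IsHomogeneous n) :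
    (fSigma d N L f σ).IsHomogeneous n := by
  have := hf.aeval (fun i : Fin N => if i ∈ σ then lamPoly d N L σ i else 0)
    (fun i => by
      split_ifs with hi
      · exact isHomogeneous_linP (L σ i)
      · exact isHomogeneous_zero _ _ _)
  simpa [fSigma] using this

theorem key_const {d N : ℕ} (hN : 1 ≤ N)
    (Δd : Finset (Finset (Fin N))) (hcard : ∀ σ ∈ Δd, σ.card = d)
    (v : Fin N → Fin d → ℝ)
    (hspan : ∀ σ ∈ Δd, Submodule.span ℝ (v '' ↑σ) = ⊤)
    (L : Finset (Fin N) → Fin N → Fin d → ℝ)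
    (hdual : ∀ σ ∈ Δd, ∀ i ∈ σ, ∀ k ∈ σ,
      (∑ j, L σ i j * v k j) = if i = k then 1 else 0)
    (w : Finset (Fin N) → ℝ)
    (hbal : ∀ τ : Finset (Fin N), τ.card + 1 = d → (∃ σ ∈ Δd, τ ⊆ σ) →
      (∑ σ ∈ Δd.filter (fun σ => τ ⊆ σ), w σ • ∑ k ∈ σ \ τ, v k)
        ∈ Submodule.span ℝ (v '' ↑τ))
    (f : MvPolynomial (Fin N) ℝ) (hf : f.IsHomogeneous d) :
    ∃ r : ℝ, ∑ σ ∈ Δd, (C (w σ) * fSigma d N L f σ) * ∏ σ' ∈ Δd.erase σ, chiPoly d N L σ'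
      = C r * ∏ σ ∈ Δd, chiPoly d N L σ := by
  classical
  obtain ⟨g, hg⟩ := key_dvd hN Δd hcard v hspan L hdual w hbal f
  have hQne : (∏ σ ∈ Δd, chiPoly d N L σ) ≠ 0 := by
    rw [Finset.prod_ne_zero_iff]
    intro σ hσ
    show (∏ i ∈ σ, lamPoly d N L σ i) ≠ 0
    rw [Finset.prod_ne_zero_iff]
    intro i hi
    exact linP_ne_zero (hLne' hdual σ hσ i hi)
  have hQhom : (∏ σ ∈ Δd, chiPoly d N L σ).IsHomogeneous (Δd.card * d) := by
    have : (∏ σ ∈ Δd, chiPoly d N L σ).IsHomogeneous (∑ σ ∈ Δd, d) :=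
      MvPolynomial.IsHomogeneous.prod _ _ _
        (fun σ hσ => hcard σ hσ ▸ chiPoly_hom L σ)
    simpa [Finset.sum_const, mul_comm] using this
  have hPhom : (∑ σ ∈ Δd, (C (w σ) * fSigma d N L f σ)
      * ∏ σ' ∈ Δd.erase σ, chiPoly d N L σ').IsHomogeneous (Δd.card * d) := by
    apply MvPolynomial.IsHomogeneous.sum
    intro σ hσ
    have h1 : (C (w σ) * fSigma d N L f σ).IsHomogeneous d :=
      (fSigma_hom L f σ hf).C_mul _
    have h2 : (∏ σ' ∈ Δd.erase σ, chiPoly d N L σ').IsHomogeneous ((Δd.erase σ).card * d) := by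
      have : (∏ σ' ∈ Δd.erase σ, chiPoly d N L σ').IsHomogeneous (∑ σ' ∈ Δd.erase σ, d) :=
        MvPolynomial.IsHomogeneous.prod _ _ _
          (fun σ' hσ' => hcard σ' (Finset.mem_of_mem_erase hσ') ▸ chiPoly_hom L σ')
      simpa [Finset.sum_const, mul_comm] using this
    have h3 := h1.mul h2
    have hc : d + (Δd.erase σ).card * d = Δd.card * d := by
      have := Finset.card_erase_add_one hσ
      nlinarith [this]
    rwa [hc] at h3
  have hghom : g.IsHomogeneous 0 := by
    have hmul : (g * ∏ σ ∈ Δd, chiPoly d N L σ).IsHomogeneous (Δd.card * d) := by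
      rw [mul_comm, ← hg]
      exact hPhom
    have := hom_cancel hQne hQhom hmul
    simpa using this
  refine ⟨coeff 0 g, ?_⟩
  rw [hg]
  conv_lhs => rw [hom_zero_eq_C hghom]
  exact mul_comm _ _

theorem eval_aeval' {d N : ℕ} (x : Fin d → ℝ) (g : Fin N → MvPolynomial (Fin d) ℝ)
    (f : MvPolynomial (Fin N) ℝ) :
    eval x (aeval g f) = eval (fun i => eval x (g i)) f := by
  rw [aeval_def, algebraMap_eq, eval₂_comp_left (eval x) C g f]
  have h1 : (eval x).comp (C : ℝ →+* MvPolynomial (Fin d) ℝ) = RingHom.id ℝ := by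
    ext r
    simp
  rw [h1]
  rfl

theorem stmt2' (d N : ℕ) (hd : 1 ≤ d) (hN : 1 ≤ N)
    (Δd : Finset (Finset (Fin N))) (hcard : ∀ σ ∈ Δd, σ.card = d)
    (v : Fin N → Fin d → ℝ)
    (hbasis : ∀ σ ∈ Δd, LinearIndependent ℝ (fun k : {x : Fin N // x ∈ σ} => v k) ∧
      Submodule.span ℝ (v '' ↑σ) = ⊤)
    (L : Finset (Fin N) → Fin N → Fin d → ℝ)
    (hdual : ∀ σ ∈ Δd, ∀ i ∈ σ, ∀ k ∈ σ,
      (∑ j, L σ i j * v k j) = if i = k then 1 else 0)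
    (w : Finset (Fin N) → ℝ)
    (hbal : ∀ τ : Finset (Fin N), τ.card + 1 = d → (∃ σ ∈ Δd, τ ⊆ σ) →
      (∑ σ ∈ Δd.filter (fun σ => τ ⊆ σ), w σ • ∑ k ∈ σ \ τ, v k)
        ∈ Submodule.span ℝ (v '' ↑τ))
    (f : MvPolynomial (Fin N) ℝ) (hf : f.IsHomogeneous d)
    (v₀ : Fin d → ℝ)
    (hX : ∀ σ ∈ Δd, ∀ i ∈ σ, (∑ j, L σ i j * v₀ j) ≠ 0) :
    ∑ σ ∈ Δd,
        algebraMap (MvPolynomial (Fin d) ℝ) (FractionRing (MvPolynomial (Fin d) ℝ))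
            (C (w σ) * fSigma d N L f σ) /
          algebraMap (MvPolynomial (Fin d) ℝ) (FractionRing (MvPolynomial (Fin d) ℝ))
            (chiPoly d N L σ)
      = algebraMap (MvPolynomial (Fin d) ℝ) (FractionRing (MvPolynomial (Fin d) ℝ))
          (C (∑ σ ∈ Δd,
            w σ * eval (fun i : Fin N => if i ∈ σ then ∑ j, L σ i j * v₀ j else 0) f /
              ∏ i ∈ σ, ∑ j, L σ i j * v₀ j)) := by
  classical
  obtain ⟨r, hr⟩ := key_const hN Δd hcard v (fun σ hσ => (hbasis σ hσ).2) L hdual w hbal f hf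
  set A := algebraMap (MvPolynomial (Fin d) ℝ) (FractionRing (MvPolynomial (Fin d) ℝ))
    with hA
  have hevχ : ∀ σ, eval v₀ (chiPoly d N L σ) = ∏ i ∈ σ, ∑ j, L σ i j * v₀ j := by
    intro σ
    show eval v₀ (∏ i ∈ σ, lamPoly d N L σ i) = _
    simp only [map_prod]
    exact Finset.prod_congr rfl (fun i _ => eval_linP _ _)
  have hχv₀ : ∀ σ ∈ Δd, eval v₀ (chiPoly d N L σ) ≠ 0 := by
    intro σ hσ
    rw [hevχ σ]
    exact Finset.prod_ne_zero_iff.mpr (fun i hi => hX σ hσ i hi)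
  have hχne : ∀ σ ∈ Δd, chiPoly d N L σ ≠ 0 := by
    intro σ hσ h0
    exact hχv₀ σ hσ (by rw [h0, map_zero])
  have hQne : (∏ σ ∈ Δd, chiPoly d N L σ) ≠ 0 :=
    Finset.prod_ne_zero_iff.mpr hχne
  have hAinj : Function.Injective A := IsFractionRing.injective _ _
  have hAne : ∀ σ ∈ Δd, A (chiPoly d N L σ) ≠ 0 := by
    intro σ hσ
    rw [Ne, map_eq_zero_iff _ hAinj]
    exact hχne σ hσ
  rw [sum_div_eq Δd _ _ hAne]
  have hnum : ∑ σ ∈ Δd, A (C (w σ) * fSigma d N L f σ)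
        * ∏ σ' ∈ Δd.erase σ, A (chiPoly d N L σ')
      = A (∑ σ ∈ Δd, (C (w σ) * fSigma d N L f σ)
        * ∏ σ' ∈ Δd.erase σ, chiPoly d N L σ') := by
    rw [map_sum]
    exact Finset.sum_congr rfl (fun σ hσ => by simp only [map_mul, map_prod])
  have hden : ∏ σ ∈ Δd, A (chiPoly d N L σ) = A (∏ σ ∈ Δd, chiPoly d N L σ) :=
    (map_prod A _ _).symm
  have hAQne : A (∏ σ ∈ Δd, chiPoly d N L σ) ≠ 0 := by
    rw [Ne, map_eq_zero_iff _ hAinj]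
    exact hQne
  rw [hnum, hden, hr, map_mul, mul_div_assoc, div_self hAQne, mul_one]
  -- it remains to identify the constant
  suffices hrc : (∑ σ ∈ Δd,
      w σ * eval (fun i : Fin N => if i ∈ σ then ∑ j, L σ i j * v₀ j else 0) f /
        ∏ i ∈ σ, ∑ j, L σ i j * v₀ j) = r by rw [hrc]
  have hbne : ∀ σ ∈ Δd, (∏ i ∈ σ, ∑ j, L σ i j * v₀ j) ≠ 0 := by
    intro σ hσ
    exact Finset.prod_ne_zero_iff.mpr (fun i hi => hX σ hσ i hi)
  rw [sum_div_eq Δd _ _ hbne]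
  have hevf : ∀ σ, eval v₀ (fSigma d N L f σ)
      = eval (fun i : Fin N => if i ∈ σ then ∑ j, L σ i j * v₀ j else 0) f := by
    intro σ
    have hfs : fSigma d N L f σ
        = aeval (fun i : Fin N => if i ∈ σ then lamPoly d N L σ i else 0) f := rfl
    rw [hfs, eval_aeval']
    have harg : (fun i : Fin N => eval v₀ (if i ∈ σ then lamPoly d N L σ i else 0))
        = (fun i : Fin N => if i ∈ σ then ∑ j, L σ i j * v₀ j else 0) := by
      funext i
      by_cases hi : i ∈ σ
      · rw [if_pos hi, if_pos hi]
        exact eval_linP _ _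
      · rw [if_neg hi, if_neg hi, map_zero]
    rw [harg]
  have hev := congrArg (eval v₀) hr
  have hev2 : ∑ σ ∈ Δd,
      (w σ * eval (fun i : Fin N => if i ∈ σ then ∑ j, L σ i j * v₀ j else 0) f)
        * ∏ σ' ∈ Δd.erase σ, ∏ i ∈ σ', ∑ j, L σ' i j * v₀ j
      = r * ∏ σ ∈ Δd, ∏ i ∈ σ, ∑ j, L σ i j * v₀ j := by
    calc ∑ σ ∈ Δd,
        (w σ * eval (fun i : Fin N => if i ∈ σ then ∑ j, L σ i j * v₀ j else 0) f)
          * ∏ σ' ∈ Δd.erase σ, ∏ i ∈ σ', ∑ j, L σ' i j * v₀ j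
        = ∑ σ ∈ Δd, eval v₀ ((C (w σ) * fSigma d N L f σ)
            * ∏ σ' ∈ Δd.erase σ, chiPoly d N L σ') := by
          apply Finset.sum_congr rfl
          intro σ hσ
          simp only [map_mul, eval_C, map_prod]
          rw [hevf σ]
          congr 1
          exact Finset.prod_congr rfl (fun σ' _ => (hevχ σ').symm)
      _ = eval v₀ (C r * ∏ σ ∈ Δd, chiPoly d N L σ) := by rw [← map_sum, hev]
      _ = r * ∏ σ ∈ Δd, ∏ i ∈ σ, ∑ j, L σ i j * v₀ j := by
          simp only [map_mul, eval_C, map_prod]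
          congr 1
          exact Finset.prod_congr rfl (fun σ _ => hevχ σ)
  rw [hev2]
  exact mul_div_cancel_right₀ r (Finset.prod_ne_zero_iff.mpr hbne)

end Stmt2Aux

/-- for balanced `w`, homogeneous `f` of degree `d`, and a general vector
`v_0` (all `X_i^σ = λ_{σ,i}(v_0) ≠ 0`), the rational function `Σ_σ w_σ f_σ/χ_σ` is the
constant polynomial with value `Σ_σ w_σ · f(X^σ)/∏_{i∈σ} X_i^σ`. -/
theorem stmt2 (d N : ℕ) (hd : 1 ≤ d) (hN : 1 ≤ N)
    (Δd : Finset (Finset (Fin N))) (hcard : ∀ σ ∈ Δd, σ.card = d)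
    (v : Fin N → Fin d → ℝ)
    (hbasis : ∀ σ ∈ Δd, LinearIndependent ℝ (fun k : {x : Fin N // x ∈ σ} => v k) ∧
      Submodule.span ℝ (v '' ↑σ) = ⊤)
    (L : Finset (Fin N) → Fin N → Fin d → ℝ)
    (hdual : ∀ σ ∈ Δd, ∀ i ∈ σ, ∀ k ∈ σ,
      (∑ j, L σ i j * v k j) = if i = k then 1 else 0)
    (w : Finset (Fin N) → ℝ)
    (hbal : ∀ τ : Finset (Fin N), τ.card + 1 = d → (∃ σ ∈ Δd, τ ⊆ σ) →
      (∑ σ ∈ Δd.filter (fun σ => τ ⊆ σ), w σ • ∑ k ∈ σ \ τ, v k)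
        ∈ Submodule.span ℝ (v '' ↑τ))
    (f : MvPolynomial (Fin N) ℝ) (hf : f.IsHomogeneous d)
    (v₀ : Fin d → ℝ)
    (hX : ∀ σ ∈ Δd, ∀ i ∈ σ, (∑ j, L σ i j * v₀ j) ≠ 0) :
    ∑ σ ∈ Δd,
        algebraMap (MvPolynomial (Fin d) ℝ) (FractionRing (MvPolynomial (Fin d) ℝ))
            (C (w σ) * fSigma d N L f σ) /
          algebraMap (MvPolynomial (Fin d) ℝ) (FractionRing (MvPolynomial (Fin d) ℝ))
            (chiPoly d N L σ)
      = algebraMap (MvPolynomial (Fin d) ℝ) (FractionRing (MvPolynomial (Fin d) ℝ))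
          (C (∑ σ ∈ Δd,
            w σ * eval (fun i : Fin N => if i ∈ σ then ∑ j, L σ i j * v₀ j else 0) f /
              ∏ i ∈ σ, ∑ j, L σ i j * v₀ j)) :=
  Stmt2Aux.stmt2' d N hd hN Δd hcard v hbasis L hdual w hbal f hf v₀ hX
end

section
/- Let N ≥ 2 and let V ∈ ℝ[x_1,…,x_N]. In the larger polynomial ring ℝ[x_0, x_1,…,x_N] define W = V − Σ_{m=2}^{M} (x_0^m/m!) · Σ_{α_1,α_2 ≥ 1, α_1+α_2=m} ∂_1^{α_1} ∂_2^{α_2} V, where M is any integer at least the total degree of V (the inner sums vanish for m greater than the degree of V, so the sum is finite and independent of M). Then (∂_1 − ∂_0)(∂_2 − ∂_0) W = 0. Moreover W|_{x_0=0} = V and (∂_0 W)|_{x_0=0} = 0. -/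
open MvPolynomial Finset

section Aux

variable {σ : Type*} [DecidableEq σ]

lemma myPderiv_comm (i j : σ) (p : MvPolynomial σ ℝ) :
    pderiv i (pderiv j p) = pderiv j (pderiv i p) := by
  induction p using MvPolynomial.induction_on' with
  | add p q hp hq => simp [map_add, hp, hq]
  | monomial s a =>
    rcases eq_or_ne i j with rfl | hij
    · rfl
    simp only [pderiv_monomial]
    rw [tsub_right_comm]
    congr 1
    simp only [Finsupp.tsub_apply, Finsupp.single_apply, if_neg hij, if_neg (Ne.symm hij),
      Nat.sub_zero]
    ring

lemma myPderiv_iter_comm (i j : σ) (b : ℕ) (p : MvPolynomial σ ℝ) :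
    pderiv i ((⇑(pderiv j))^[b] p) = (⇑(pderiv j))^[b] (pderiv i p) := by
  induction b generalizing p with
  | zero => rfl
  | succ b ih =>
    rw [Function.iterate_succ_apply, Function.iterate_succ_apply, ih, myPderiv_comm]

lemma myPderiv_td (i : σ) (p : MvPolynomial σ ℝ) (n : ℕ) (h : p.totalDegree ≤ n + 1) :
    (pderiv i p).totalDegree ≤ n := by
  conv_lhs => rw [p.as_sum]
  rw [map_sum]
  refine le_trans (totalDegree_finset_sum _ _) (Finset.sup_le fun s hs => ?_)
  rw [pderiv_monomial]
  by_cases h0 : s i = 0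
  · simp [h0]
  · refine le_trans (totalDegree_monomial_le _ _) ?_
    simp only [Function.id_def]
    have h2 : (s.sum fun _ e => e) ≤ n + 1 := le_trans (MvPolynomial.le_totalDegree hs) h
    have hsum : ((s - Finsupp.single i 1).sum fun _ e => e) + 1 = s.sum fun _ e => e := by
      have hd : s = (s - Finsupp.single i 1) + Finsupp.single i 1 := by
        ext k
        simp only [Finsupp.coe_add, Pi.add_apply, Finsupp.tsub_apply, Finsupp.single_apply]
        rcases eq_or_ne i k with rfl | hk
        · rw [if_pos rfl]
          omega
        · simp [hk]
      conv_rhs => rw [hd]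
      rw [Finsupp.sum_add_index (fun _ _ => rfl) (fun _ _ _ _ => rfl)]
      rw [Finsupp.sum_single_index rfl]
    rw [← hsum] at h2
    omega

lemma myPderiv_iter_td (i : σ) (b n : ℕ) (p : MvPolynomial σ ℝ) (h : p.totalDegree ≤ n + b) :
    ((⇑(pderiv i))^[b] p).totalDegree ≤ n := by
  induction b generalizing p with
  | zero => simpa using h
  | succ b ih =>
    rw [Function.iterate_succ_apply]
    exact ih _ (myPderiv_td i p (n + b) (by omega))

lemma myPderiv_td0 (i : σ) (p : MvPolynomial σ ℝ) (h : p.totalDegree = 0) :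
    pderiv i p = 0 := by
  rw [p.as_sum, map_sum]
  refine Finset.sum_eq_zero fun s hs => ?_
  rw [pderiv_monomial]
  have := (totalDegree_eq_zero_iff σ p).mp h s hs i
  simp [this]

lemma myVanish (i j : σ) (a b n : ℕ) (p : MvPolynomial σ ℝ) (ha : 1 ≤ a)
    (h : p.totalDegree ≤ n) (hn : n < a + b) :
    (⇑(pderiv i))^[a] ((⇑(pderiv j))^[b] p) = 0 := by
  obtain ⟨a', rfl⟩ : ∃ a', a = a' + 1 := ⟨a - 1, by omega⟩
  rw [Function.iterate_succ_apply']
  have h1 : ((⇑(pderiv j))^[b] p).totalDegree ≤ a' := myPderiv_iter_td _ _ _ _ (by omega)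
  have h2 : ((⇑(pderiv i))^[a'] ((⇑(pderiv j))^[b] p)).totalDegree ≤ 0 :=
    myPderiv_iter_td _ _ _ _ (by omega)
  exact myPderiv_td0 _ _ (Nat.le_zero.mp h2)

lemma mySum_Icc_add {β : Type*} [AddCommMonoid β] (a b d : ℕ) (f : ℕ → β) :
    ∑ m ∈ Finset.Icc (a + d) (b + d), f m = ∑ k ∈ Finset.Icc a b, f (k + d) := by
  rw [← Finset.map_add_right_Icc, Finset.sum_map]
  rfl

lemma pd_keep (i0 j : σ) (h : i0 ≠ j) (c : ℝ) (k : ℕ) (q : MvPolynomial σ ℝ) :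
    pderiv j (C c * X i0 ^ k * q) = C c * X i0 ^ k * pderiv j q := by
  rw [pderiv_mul, pderiv_mul, pderiv_C, pderiv_pow, pderiv_X_of_ne h]
  ring

lemma pd_drop (i0 : σ) (c : ℝ) (k : ℕ) (q : MvPolynomial σ ℝ) :
    pderiv i0 (C c * X i0 ^ k * q)
      = C (c * k) * X i0 ^ (k - 1) * q + C c * X i0 ^ k * pderiv i0 q := by
  rw [pderiv_mul, pderiv_mul, pderiv_C, pderiv_pow, pderiv_X_self, map_mul, map_natCast]
  ring

/-- The inner sum `T m`. -/
noncomputable def Tm (i1 i2 : σ) (V' : MvPolynomial σ ℝ) (m : ℕ) : MvPolynomial σ ℝ :=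
  ∑ a ∈ Finset.Ico 1 m, (⇑(pderiv i1))^[a] ((⇑(pderiv i2))^[m - a] V')

lemma Tm_small (i1 i2 : σ) (V' : MvPolynomial σ ℝ) (m : ℕ) (hm : m ≤ 1) :
    Tm i1 i2 V' m = 0 := by
  rw [Tm, Finset.Ico_eq_empty (by omega), Finset.sum_empty]

lemma Tm_big (i1 i2 : σ) (V' : MvPolynomial σ ℝ) (M m : ℕ) (hdeg : V'.totalDegree ≤ M)
    (hm : M < m) : Tm i1 i2 V' m = 0 := by
  refine Finset.sum_eq_zero fun a ha => ?_
  rw [Finset.mem_Ico] at ha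
  exact myVanish _ _ _ _ M _ ha.1 hdeg (by omega)

lemma Tm_two (i1 i2 : σ) (V' : MvPolynomial σ ℝ) :
    Tm i1 i2 V' 2 = pderiv i1 (pderiv i2 V') := by
  rw [Tm, Finset.sum_Ico_succ_top le_rfl, Finset.Ico_self, Finset.sum_empty, zero_add]
  simp

lemma pd0_Tm (i0 i1 i2 : σ) (V' : MvPolynomial σ ℝ) (hV0 : pderiv i0 V' = 0) (m : ℕ) :
    pderiv i0 (Tm i1 i2 V' m) = 0 := by
  rw [Tm, map_sum]
  refine Finset.sum_eq_zero fun a _ => ?_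
  rw [myPderiv_iter_comm, myPderiv_iter_comm, hV0,
    Function.iterate_fixed (map_zero _) , Function.iterate_fixed (map_zero _)]

lemma Tm_rec (i1 i2 : σ) (V' : MvPolynomial σ ℝ) (k : ℕ) (hk : 1 ≤ k) :
    pderiv i1 (Tm i1 i2 V' (k + 1)) + pderiv i2 (Tm i1 i2 V' (k + 1))
      = pderiv i1 (pderiv i2 (Tm i1 i2 V' k)) + Tm i1 i2 V' (k + 2) := by
  have e1 : pderiv i1 (Tm i1 i2 V' (k + 1))
      = ∑ a ∈ Finset.Ico 1 (k + 1), (⇑(pderiv i1))^[a + 1] ((⇑(pderiv i2))^[k + 1 - a] V') := by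
    rw [Tm, map_sum]
    exact Finset.sum_congr rfl fun a _ => (Function.iterate_succ_apply' _ _ _).symm
  have e2 : pderiv i2 (Tm i1 i2 V' (k + 1))
      = ∑ a ∈ Finset.Ico 1 (k + 1), (⇑(pderiv i1))^[a] ((⇑(pderiv i2))^[k + 2 - a] V') := by
    rw [Tm, map_sum]
    refine Finset.sum_congr rfl fun a ha => ?_
    rw [Finset.mem_Ico] at ha
    rw [myPderiv_iter_comm]
    rw [← Function.iterate_succ_apply' (⇑(pderiv i2))]
    congr 2
    omega
  have e3 : pderiv i1 (pderiv i2 (Tm i1 i2 V' k))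
      = ∑ a ∈ Finset.Ico 1 k, (⇑(pderiv i1))^[a + 1] ((⇑(pderiv i2))^[k + 1 - a] V') := by
    rw [Tm, map_sum, map_sum]
    refine Finset.sum_congr rfl fun a ha => ?_
    rw [Finset.mem_Ico] at ha
    rw [myPderiv_iter_comm]
    rw [← Function.iterate_succ_apply' (⇑(pderiv i2))]
    rw [show (k - a).succ = k + 1 - a by omega]
    exact (Function.iterate_succ_apply' _ _ _).symm
  rw [e1, e2, e3, Tm]
  rw [Finset.sum_Ico_succ_top hk (fun a => (⇑(pderiv i1))^[a + 1] ((⇑(pderiv i2))^[k + 1 - a] V'))]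
  rw [Finset.sum_Ico_succ_top (by omega : 1 ≤ k + 1)
    (fun a => (⇑(pderiv i1))^[a] ((⇑(pderiv i2))^[k + 2 - a] V'))]
  rw [show k + 1 - k = 1 by omega, show k + 2 - (k + 1) = 1 by omega]
  ring

end Aux

open MvPolynomial

/-- The partial derivative `∂_i`, as a linear endomorphism of `ℝ[x_0,…,x_N]`. -/
noncomputable def pdOp (N : ℕ) (i : Fin (N + 1)) :
    MvPolynomial (Fin (N + 1)) ℝ →ₗ[ℝ] MvPolynomial (Fin (N + 1)) ℝ :=
  (pderiv i).toLinearMap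

/-- The polynomial `W = V − Σ_{m=2}^{M} (x_0^m/m!) · Σ_{α_1,α_2 ≥ 1, α_1+α_2=m}
∂_1^{α_1} ∂_2^{α_2} V` in `ℝ[x_0,…,x_N]`, where `V ∈ ℝ[x_1,…,x_N]` is embedded via
`rename Fin.succ`. -/
noncomputable def starSubdivW (N M : ℕ) (hN : 2 ≤ N) (V : MvPolynomial (Fin N) ℝ) :
    MvPolynomial (Fin (N + 1)) ℝ :=
  rename Fin.succ V -
    ∑ m ∈ Finset.Icc 2 M, C ((1 : ℝ) / m.factorial) * X (0 : Fin (N + 1)) ^ m *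
      ∑ a ∈ Finset.Ico 1 m,
        (⇑(pderiv (⟨1, by omega⟩ : Fin (N + 1))))^[a]
          ((⇑(pderiv (⟨2, by omega⟩ : Fin (N + 1))))^[m - a] (rename Fin.succ V))


section Main

variable {σ : Type*} [DecidableEq σ]

lemma hd2W (i0 j : σ) (h0j : i0 ≠ j) (i1 i2 : σ) (V' : MvPolynomial σ ℝ) (M : ℕ) :
    pderiv j (V' - ∑ m ∈ Finset.Icc 2 M,
        C ((1 : ℝ) / m.factorial) * X i0 ^ m * Tm i1 i2 V' m)
      = pderiv j V' - ∑ m ∈ Finset.Icc 2 M,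
          C ((1 : ℝ) / m.factorial) * X i0 ^ m * pderiv j (Tm i1 i2 V' m) := by
  rw [map_sub, map_sum]
  congr 1
  exact Finset.sum_congr rfl fun m _ => pd_keep i0 j h0j _ _ _

lemma hd0W (i0 i1 i2 : σ) (V' : MvPolynomial σ ℝ) (hV0 : pderiv i0 V' = 0) (M : ℕ) :
    pderiv i0 (V' - ∑ m ∈ Finset.Icc 2 M,
        C ((1 : ℝ) / m.factorial) * X i0 ^ m * Tm i1 i2 V' m)
      = - ∑ m ∈ Finset.Icc 2 M,
          C ((1 : ℝ) / m.factorial * m) * X i0 ^ (m - 1) * Tm i1 i2 V' m := by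
  rw [map_sub, map_sum, hV0, zero_sub, neg_inj]
  refine Finset.sum_congr rfl fun m _ => ?_
  rw [pd_drop, pd0_Tm i0 i1 i2 V' hV0, mul_zero, add_zero]


lemma mySum_shift {β : Type*} [AddCommMonoid β] (a b d a' b' : ℕ) (ha : a' = a + d)
    (hb : b' = b + d) (f : ℕ → β) :
    ∑ m ∈ Finset.Icc a' b', f m = ∑ k ∈ Finset.Icc a b, f (k + d) := by
  subst ha hb
  exact mySum_Icc_add a b d f

/-- The polynomial `W` in abstract form. -/
noncomputable def Wm (i0 i1 i2 : σ) (V' : MvPolynomial σ ℝ) (M : ℕ) : MvPolynomial σ ℝ :=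
  V' - ∑ m ∈ Finset.Icc 2 M, C ((1 : ℝ) / m.factorial) * X i0 ^ m * Tm i1 i2 V' m

lemma conclusion1 (i0 i1 i2 : σ) (h01 : i0 ≠ i1) (h02 : i0 ≠ i2)
    (V' : MvPolynomial σ ℝ) (hV0 : pderiv i0 V' = 0) (M : ℕ) (hdeg : V'.totalDegree ≤ M) :
    pderiv i1 (pderiv i2 (Wm i0 i1 i2 V' M) - pderiv i0 (Wm i0 i1 i2 V' M))
      - pderiv i0 (pderiv i2 (Wm i0 i1 i2 V' M) - pderiv i0 (Wm i0 i1 i2 V' M)) = 0 := by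
  have h2W := hd2W i0 i2 h02 i1 i2 V' M
  have h0W := hd0W i0 i1 i2 V' hV0 M
  have hA : pderiv i1 (pderiv i2 (Wm i0 i1 i2 V' M))
      = pderiv i1 (pderiv i2 V') - ∑ m ∈ Finset.Icc 2 M,
          C ((1 : ℝ) / m.factorial) * X i0 ^ m * pderiv i1 (pderiv i2 (Tm i1 i2 V' m)) := by
    rw [Wm, h2W, map_sub, map_sum]
    congr 1
    exact Finset.sum_congr rfl fun m _ => pd_keep i0 i1 h01 _ _ _
  have hB : pderiv i1 (pderiv i0 (Wm i0 i1 i2 V' M))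
      = - ∑ m ∈ Finset.Icc 2 M,
          C ((1 : ℝ) / m.factorial * m) * X i0 ^ (m - 1) * pderiv i1 (Tm i1 i2 V' m) := by
    rw [Wm, h0W, map_neg, map_sum, neg_inj]
    exact Finset.sum_congr rfl fun m _ => pd_keep i0 i1 h01 _ _ _
  have hC : pderiv i0 (pderiv i2 (Wm i0 i1 i2 V' M))
      = - ∑ m ∈ Finset.Icc 2 M,
          C ((1 : ℝ) / m.factorial * m) * X i0 ^ (m - 1) * pderiv i2 (Tm i1 i2 V' m) := by
    rw [Wm, h2W, map_sub, map_sum]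
    rw [show pderiv i0 (pderiv i2 V') = 0 by rw [myPderiv_comm, hV0, map_zero]]
    rw [zero_sub, neg_inj]
    refine Finset.sum_congr rfl fun m _ => ?_
    rw [pd_drop, myPderiv_comm, pd0_Tm i0 i1 i2 V' hV0, map_zero, mul_zero, add_zero]
  have hD : pderiv i0 (pderiv i0 (Wm i0 i1 i2 V' M))
      = - ∑ m ∈ Finset.Icc 2 M,
          C ((1 : ℝ) / m.factorial * m * (m - 1 : ℕ)) * X i0 ^ (m - 1 - 1)
            * Tm i1 i2 V' m := by
    rw [Wm, h0W, map_neg, map_sum, neg_inj]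
    refine Finset.sum_congr rfl fun m _ => ?_
    rw [pd_drop, pd0_Tm i0 i1 i2 V' hV0, mul_zero, add_zero]
  rw [map_sub, map_sub, hA, hB, hC, hD]
  rcases le_or_gt M 1 with hM1 | hM1
  · have hP0 : pderiv i1 (pderiv i2 V') = 0 := by
      rw [← Tm_two i1 i2 V']
      exact Tm_big i1 i2 V' M 2 hdeg (by omega)
    rw [Finset.Icc_eq_empty (by omega : ¬ (2 : ℕ) ≤ M)]
    simp [hP0]
  · obtain ⟨M', rfl⟩ : ∃ M', M = M' + 2 := ⟨M - 2, by omega⟩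
    have eA : ∑ m ∈ Finset.Icc 2 (M' + 2),
          C ((1 : ℝ) / m.factorial) * X i0 ^ m * pderiv i1 (pderiv i2 (Tm i1 i2 V' m))
        = ∑ k ∈ Finset.Icc 0 (M' + 2),
          C ((1 : ℝ) / k.factorial) * X i0 ^ k * pderiv i1 (pderiv i2 (Tm i1 i2 V' k)) := by
      refine Finset.sum_subset (Finset.Icc_subset_Icc (by omega) le_rfl) fun x hx hxn => ?_
      simp only [Finset.mem_Icc] at hx hxn
      rw [Tm_small i1 i2 V' x (by omega), map_zero, map_zero, mul_zero]
    have eB : ∑ m ∈ Finset.Icc 2 (M' + 2),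
          C ((1 : ℝ) / m.factorial * m) * X i0 ^ (m - 1) * pderiv i1 (Tm i1 i2 V' m)
        = ∑ k ∈ Finset.Icc 0 (M' + 2),
          C ((1 : ℝ) / k.factorial) * X i0 ^ k * pderiv i1 (Tm i1 i2 V' (k + 1)) := by
      rw [mySum_shift 1 (M' + 1) 1 2 (M' + 2) (by omega) (by omega)]
      have e : ∀ k : ℕ, C ((1 : ℝ) / (k + 1).factorial * (k + 1 : ℕ)) * X i0 ^ (k + 1 - 1)
          = C ((1 : ℝ) / k.factorial) * (X i0 : MvPolynomial σ ℝ) ^ k := by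
        intro k
        rw [show k + 1 - 1 = k by omega]
        congr 1
        rw [Nat.factorial_succ]
        have hk0 : ((k.factorial : ℝ)) ≠ 0 := Nat.cast_ne_zero.mpr k.factorial_ne_zero
        push_cast
        field_simp <;> ring
      calc ∑ k ∈ Finset.Icc 1 (M' + 1), C ((1 : ℝ) / (k + 1).factorial * (k + 1 : ℕ))
              * X i0 ^ (k + 1 - 1) * pderiv i1 (Tm i1 i2 V' (k + 1))
          = ∑ k ∈ Finset.Icc 1 (M' + 1),
              C ((1 : ℝ) / k.factorial) * X i0 ^ k * pderiv i1 (Tm i1 i2 V' (k + 1)) :=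
            Finset.sum_congr rfl fun k _ => by rw [e]
        _ = _ := by
            refine Finset.sum_subset (Finset.Icc_subset_Icc (by omega) (by omega))
              fun x hx hxn => ?_
            simp only [Finset.mem_Icc] at hx hxn
            rcases Nat.eq_zero_or_pos x with rfl | hx1
            · rw [Tm_small i1 i2 V' 1 le_rfl, map_zero, mul_zero]
            · rw [Tm_big i1 i2 V' (M' + 2) (x + 1) hdeg (by omega), map_zero, mul_zero]
    have eC : ∑ m ∈ Finset.Icc 2 (M' + 2),
          C ((1 : ℝ) / m.factorial * m) * X i0 ^ (m - 1) * pderiv i2 (Tm i1 i2 V' m)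
        = ∑ k ∈ Finset.Icc 0 (M' + 2),
          C ((1 : ℝ) / k.factorial) * X i0 ^ k * pderiv i2 (Tm i1 i2 V' (k + 1)) := by
      rw [mySum_shift 1 (M' + 1) 1 2 (M' + 2) (by omega) (by omega)]
      have e : ∀ k : ℕ, C ((1 : ℝ) / (k + 1).factorial * (k + 1 : ℕ)) * X i0 ^ (k + 1 - 1)
          = C ((1 : ℝ) / k.factorial) * (X i0 : MvPolynomial σ ℝ) ^ k := by
        intro k
        rw [show k + 1 - 1 = k by omega]
        congr 1
        rw [Nat.factorial_succ]
        have hk0 : ((k.factorial : ℝ)) ≠ 0 := Nat.cast_ne_zero.mpr k.factorial_ne_zero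
        push_cast
        field_simp <;> ring
      calc ∑ k ∈ Finset.Icc 1 (M' + 1), C ((1 : ℝ) / (k + 1).factorial * (k + 1 : ℕ))
              * X i0 ^ (k + 1 - 1) * pderiv i2 (Tm i1 i2 V' (k + 1))
          = ∑ k ∈ Finset.Icc 1 (M' + 1),
              C ((1 : ℝ) / k.factorial) * X i0 ^ k * pderiv i2 (Tm i1 i2 V' (k + 1)) :=
            Finset.sum_congr rfl fun k _ => by rw [e]
        _ = _ := by
            refine Finset.sum_subset (Finset.Icc_subset_Icc (by omega) (by omega))
              fun x hx hxn => ?_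
            simp only [Finset.mem_Icc] at hx hxn
            rcases Nat.eq_zero_or_pos x with rfl | hx1
            · rw [Tm_small i1 i2 V' 1 le_rfl, map_zero, mul_zero]
            · rw [Tm_big i1 i2 V' (M' + 2) (x + 1) hdeg (by omega), map_zero, mul_zero]
    have eD : ∑ m ∈ Finset.Icc 2 (M' + 2),
          C ((1 : ℝ) / m.factorial * m * (m - 1 : ℕ)) * X i0 ^ (m - 1 - 1) * Tm i1 i2 V' m
        = ∑ k ∈ Finset.Icc 0 (M' + 2),
          C ((1 : ℝ) / k.factorial) * X i0 ^ k * Tm i1 i2 V' (k + 2) := by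
      rw [mySum_shift 0 M' 2 2 (M' + 2) (by omega) (by omega)]
      have e : ∀ k : ℕ, C ((1 : ℝ) / (k + 2).factorial * (k + 2 : ℕ) * ((k + 2 - 1 : ℕ) : ℝ))
          * X i0 ^ (k + 2 - 1 - 1)
          = C ((1 : ℝ) / k.factorial) * (X i0 : MvPolynomial σ ℝ) ^ k := by
        intro k
        rw [show k + 2 - 1 - 1 = k by omega, show k + 2 - 1 = k + 1 by omega]
        congr 1
        rw [show (k + 2).factorial = (k + 2) * ((k + 1) * k.factorial) by
          rw [Nat.factorial_succ, Nat.factorial_succ]]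
        have hk0 : ((k.factorial : ℝ)) ≠ 0 := Nat.cast_ne_zero.mpr k.factorial_ne_zero
        push_cast
        field_simp <;> ring
      calc ∑ k ∈ Finset.Icc 0 M', C ((1 : ℝ) / (k + 2).factorial * (k + 2 : ℕ)
              * ((k + 2 - 1 : ℕ) : ℝ)) * X i0 ^ (k + 2 - 1 - 1) * Tm i1 i2 V' (k + 2)
          = ∑ k ∈ Finset.Icc 0 M',
              C ((1 : ℝ) / k.factorial) * X i0 ^ k * Tm i1 i2 V' (k + 2) :=
            Finset.sum_congr rfl fun k _ => by rw [e]
        _ = _ := by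
            refine Finset.sum_subset (Finset.Icc_subset_Icc le_rfl (by omega))
              fun x hx hxn => ?_
            simp only [Finset.mem_Icc] at hx hxn
            rw [Tm_big i1 i2 V' (M' + 2) (x + 2) hdeg (by omega), mul_zero]
    rw [eA, eB, eC, eD]
    have hP : pderiv i1 (pderiv i2 V')
        = C ((1 : ℝ) / (Nat.factorial 0)) * X i0 ^ 0 * Tm i1 i2 V' 2 := by
      rw [Tm_two]
      simp [Nat.factorial]
    have key : ∑ k ∈ Finset.Icc 0 (M' + 2),
          (C ((1 : ℝ) / k.factorial) * X i0 ^ k * pderiv i1 (pderiv i2 (Tm i1 i2 V' k))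
            + C ((1 : ℝ) / k.factorial) * X i0 ^ k * Tm i1 i2 V' (k + 2)
            - C ((1 : ℝ) / k.factorial) * X i0 ^ k * pderiv i1 (Tm i1 i2 V' (k + 1))
            - C ((1 : ℝ) / k.factorial) * X i0 ^ k * pderiv i2 (Tm i1 i2 V' (k + 1)))
        = C ((1 : ℝ) / (Nat.factorial 0)) * X i0 ^ 0 * Tm i1 i2 V' 2 := by
      rw [Finset.sum_eq_single 0]
      · norm_num [Tm_small i1 i2 V' 0 (by omega), Tm_small i1 i2 V' 1 le_rfl]
      · intro k hk hk0
        have hk1 : 1 ≤ k := Nat.pos_of_ne_zero hk0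
        linear_combination (-(C ((1 : ℝ) / k.factorial) * (X i0 : MvPolynomial σ ℝ) ^ k)) *
          Tm_rec i1 i2 V' k hk1
      · intro h
        exact absurd (Finset.mem_Icc.mpr ⟨Nat.zero_le _, Nat.zero_le _⟩) h
    rw [Finset.sum_sub_distrib, Finset.sum_sub_distrib, Finset.sum_add_distrib] at key
    linear_combination hP - key

end Main

/-- `W` satisfies `(∂_1 − ∂_0)(∂_2 − ∂_0) W = 0`, `W|_{x_0=0} = V`, and
`(∂_0 W)|_{x_0=0} = 0`, provided `M` is at least the total degree of `V`. -/
theorem stmt4 (N M : ℕ) (hN : 2 ≤ N) (V : MvPolynomial (Fin N) ℝ)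
    (hM : V.totalDegree ≤ M) :
    (pdOp N ⟨1, by omega⟩ - pdOp N 0)
      ((pdOp N ⟨2, by omega⟩ - pdOp N 0) (starSubdivW N M hN V)) = 0 ∧
    aeval (fun k : Fin (N + 1) => if k = 0 then 0 else X k) (starSubdivW N M hN V)
        = rename Fin.succ V ∧
    aeval (fun k : Fin (N + 1) =>
        if k = 0 then 0 else (X k : MvPolynomial (Fin (N + 1)) ℝ))
        (pderiv (0 : Fin (N + 1)) (starSubdivW N M hN V)) = 0 := by
  have h01 : (0 : Fin (N + 1)) ≠ ⟨1, by omega⟩ := by simp [Fin.ext_iff]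
  have h02 : (0 : Fin (N + 1)) ≠ ⟨2, by omega⟩ := by simp [Fin.ext_iff]
  have hdeg : (rename Fin.succ V).totalDegree ≤ M :=
    le_trans (totalDegree_rename_le _ _) hM
  have hV0 : pderiv (0 : Fin (N + 1)) (rename Fin.succ V) = 0 := by
    apply pderiv_eq_zero_of_notMem_vars
    intro h
    obtain ⟨i, -, hi⟩ := mem_vars_rename _ _ h
    exact Fin.succ_ne_zero i hi
  have hW : starSubdivW N M hN V
      = Wm 0 ⟨1, by omega⟩ ⟨2, by omega⟩ (rename Fin.succ V) M := rfl
  refine ⟨?_, ?_, ?_⟩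
  · rw [hW]
    have hop : ∀ (a b : Fin (N + 1)) (p : MvPolynomial (Fin (N + 1)) ℝ),
        (pdOp N a - pdOp N b) p = pderiv a p - pderiv b p := fun _ _ _ => rfl
    rw [hop, hop]
    exact conclusion1 _ _ _ h01 h02 _ hV0 M hdeg
  · rw [hW, Wm, map_sub]
    have h1 : aeval (fun k : Fin (N + 1) => if k = 0 then 0 else X k)
        (rename Fin.succ V) = rename Fin.succ V := by
      rw [aeval_rename]
      have he : ((fun k : Fin (N + 1) =>
            if k = 0 then (0 : MvPolynomial (Fin (N + 1)) ℝ) else X k) ∘ Fin.succ)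
          = fun i => X (Fin.succ i) := by
        funext i
        simp [Fin.succ_ne_zero i]
      rw [he, rename_eq_aeval]
      rfl
    rw [h1, map_sum]
    rw [Finset.sum_eq_zero, sub_zero]
    intro m hm
    rw [Finset.mem_Icc] at hm
    rw [map_mul, map_mul, map_pow, aeval_X, if_pos rfl, zero_pow (by omega), mul_zero, zero_mul]
  · rw [hW, Wm, hd0W 0 _ _ _ hV0 M, map_neg, map_sum]
    rw [Finset.sum_eq_zero, neg_zero]
    intro m hm
    rw [Finset.mem_Icc] at hm
    rw [map_mul, map_mul, map_pow, aeval_X, if_pos rfl, zero_pow (by omega), mul_zero, zero_mul]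
end

section
/- Let M be a matroid on a finite ground set E, let i ∈ E be such that {i} is a flat of M, and let F ⊆ E be such that i ∉ F and both F and F ∪ {i} are flats of M. Then the map G ↦ G ∩ F is an order isomorphism (with respect to inclusion) from the set of flats G of M satisfying {i} ⊆ G ⊆ F ∪ {i} onto the set of flats G of M satisfying G ⊆ F, and its inverse is given by G ↦ G ∪ {i}. -/
open Set

private lemma interFlat {α : Type*} {M : Matroid α} {F G : Set α}
    (hFflat : M.closure F = F) (hGflat : M.closure G = G) :
    M.closure (G ∩ F) = G ∩ F := by
  refine subset_antisymm ?_ (M.subset_closure _ ?_)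
  · exact subset_inter
      ((M.closure_subset_closure inter_subset_left).trans hGflat.subset)
      ((M.closure_subset_closure inter_subset_right).trans hFflat.subset)
  · exact inter_subset_left.trans (hGflat ▸ M.closure_subset_ground G)

private lemma insertFlat {α : Type*} {M : Matroid α} {F G : Set α} {i : α}
    (hi : i ∈ M.E) (hiF : i ∉ F) (hFflat : M.closure F = F)
    (hFiflat : M.closure (insert i F) = insert i F)
    (hGF : G ⊆ F) (hGflat : M.closure G = G) :
    M.closure (insert i G) = insert i G := by
  have hFE : F ⊆ M.E := hFflat ▸ M.closure_subset_ground F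
  refine subset_antisymm ?_ (M.subset_closure _ (insert_subset hi (hGF.trans hFE)))
  intro x hx
  have hx' : x ∈ insert i F := by
    refine hFiflat ▸ (M.closure_subset_closure ?_) hx
    exact insert_subset_insert hGF
  rcases hx' with rfl | hxF
  · exact mem_insert _ _
  · by_contra hxG
    have hxG'' : x ∉ M.closure G := fun h => hxG (Or.inr (hGflat ▸ h))
    have := Matroid.closure_exchange (M := M) (e := x) (f := i) (X := G) ⟨hx, hxG''⟩
    have hiFmem : i ∈ F := hFflat ▸ (M.closure_subset_closure
      (insert_subset hxF hGF)) this.1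
    exact hiF hiFmem

/-- if `{i}` is a flat of `M` and `F`, `F ∪ {i}` are flats with `i ∉ F`,
then `G ↦ G ∩ F` is an order isomorphism from the flats `G` with `{i} ⊆ G ⊆ F ∪ {i}`
onto the flats `G` with `G ⊆ F`, with inverse `G ↦ G ∪ {i}`.
(Here a flat is a set `G` with `M.closure G = G`.) -/
theorem stmt10 (α : Type*) (M : Matroid α) (hfin : M.E.Finite)
    (i : α) (hi : i ∈ M.E) (hiflat : M.closure {i} = {i})
    (F : Set α) (hF : F ⊆ M.E) (hiF : i ∉ F)
    (hFflat : M.closure F = F) (hFiflat : M.closure (insert i F) = insert i F) :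
    ∃ e : {G : Set α // M.closure G = G ∧ i ∈ G ∧ G ⊆ insert i F} ≃o
        {G : Set α // M.closure G = G ∧ G ⊆ F},
      (∀ G, (e G : Set α) = (G : Set α) ∩ F) ∧
      (∀ G, (e.symm G : Set α) = insert i (G : Set α)) := by
  have key : ∀ G : Set α, M.closure G = G → i ∈ G → G ⊆ insert i F →
      insert i (G ∩ F) = G := by
    intro G hGf hiG hGsub
    ext x
    simp only [mem_insert_iff, mem_inter_iff]
    constructor
    · rintro (rfl | ⟨h, _⟩) <;> assumption
    · intro hxG
      rcases hGsub hxG with rfl | hxF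
      · exact Or.inl rfl
      · exact Or.inr ⟨hxG, hxF⟩
  refine ⟨{
    toFun := fun G => ⟨(G : Set α) ∩ F, interFlat hFflat G.2.1,
      inter_subset_right⟩
    invFun := fun G => ⟨insert i (G : Set α),
      insertFlat hi hiF hFflat hFiflat G.2.2 G.2.1, mem_insert _ _,
      insert_subset_insert G.2.2⟩
    left_inv := fun G => Subtype.ext (key G G.2.1 G.2.2.1 G.2.2.2)
    right_inv := fun G => Subtype.ext (by
      simp only
      rw [insert_inter_of_notMem hiF, inter_eq_left]
      exact G.2.2)
    map_rel_iff' := by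
      rintro ⟨G, hG⟩ ⟨G', hG'⟩
      simp only [Equiv.coe_fn_mk, Subtype.mk_le_mk]
      constructor
      · intro h
        have := key G hG.1 hG.2.1 hG.2.2 ▸ key G' hG'.1 hG'.2.1 hG'.2.2 ▸
          insert_subset_insert (a := i) h
        exact this
      · intro h
        exact inter_subset_inter_left F h }, fun G => rfl, fun G => rfl⟩
end

section
/- Let Δ be a finite abstract simplicial complex on the vertex set {1,…,N} (a collection of subsets of {1,…,N} closed under taking subsets), let I_Δ ⊆ ℝ[∂_1,…,∂_N] be the ideal generated by the monomials ∏_{k∈S} ∂_k over subsets S ∉ Δ, and let Θ ⊆ ℝ[∂_1,…,∂_N]_1 be a linear subspace of linear forms such that for every face σ ∈ Δ and every i ∈ σ there exists l ∈ Θ whose coefficient at ∂_i equals 1 and whose coefficient at ∂_k equals 0 for every k ∈ σ∖{i}. Then the quotient ring ℝ[∂_1,…,∂_N]/(I_Δ + (Θ)) is spanned as an ℝ-vector space by the images of the squarefree monomials ∂_σ = ∏_{k∈σ} ∂_k for σ ∈ Δ (with ∂_∅ = 1). -/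
open MvPolynomial

/-- The Stanley–Reisner ideal `I_Δ`, generated by the monomials `∏_{k∈S} ∂_k`
over non-faces `S ∉ Δ`. -/
noncomputable def srIdeal (N : ℕ) (Δ : Finset (Finset (Fin N))) :
    Ideal (MvPolynomial (Fin N) ℝ) :=
  Ideal.span {p | ∃ S : Finset (Fin N), S ∉ Δ ∧ p = ∏ k ∈ S, X k}

/-- The ideal `I_Δ + (Θ)`. -/
noncomputable def chowIdeal14 (N : ℕ) (Δ : Finset (Finset (Fin N)))
    (Θ : Submodule ℝ (MvPolynomial (Fin N) ℝ)) : Ideal (MvPolynomial (Fin N) ℝ) :=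
  srIdeal N Δ ⊔ Ideal.span (Θ : Set (MvPolynomial (Fin N) ℝ))


lemma fre_deg_single {σ' : Type*} (k : σ') : (Finsupp.single k 1 : σ' →₀ ℕ).degree = 1 := by
  simp [Finsupp.degree_apply, Finsupp.support_single_ne_zero k one_ne_zero]

lemma fre_deg_one {σ' : Type*} (d : σ' →₀ ℕ) (h : d.degree = 1) :
    ∃ k, d = Finsupp.single k 1 := by
  have hne : d ≠ 0 := by rintro rfl; simp at h
  obtain ⟨k, hk⟩ := Finsupp.support_nonempty_iff.2 hne
  have hk1 : d k = 1 :=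
    le_antisymm (h ▸ Finsupp.le_degree k d) (Nat.one_le_iff_ne_zero.2 (Finsupp.mem_support_iff.1 hk))
  refine ⟨k, Finsupp.ext fun j => ?_⟩
  rcases eq_or_ne j k with rfl | hjk
  · simp [hk1]
  · classical
    rw [Finsupp.single_apply, if_neg hjk.symm]
    by_contra hj
    have hjs : j ∈ d.support := Finsupp.mem_support_iff.2 hj
    have hsub : ({k, j} : Finset σ') ⊆ d.support := by
      intro x hx
      rcases Finset.mem_insert.1 hx with rfl | hx
      · exact hk
      · rw [Finset.mem_singleton.1 hx]; exact hjs
    have : d k + d j ≤ d.degree := by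
      rw [Finsupp.degree, ← Finset.sum_pair (a := k) (b := j) (Ne.symm hjk)]
      exact Finset.sum_le_sum_of_subset hsub
    omega

lemma fre_hom1 {N : ℕ} (l : MvPolynomial (Fin N) ℝ) (h : l.IsHomogeneous 1) :
    l = ∑ k : Fin N, C (coeff (Finsupp.single k 1) l) * X k := by
  apply MvPolynomial.ext
  intro d
  rw [coeff_sum]
  simp only [coeff_C_mul, coeff_X']
  by_cases hd : ∃ k0, d = Finsupp.single k0 1
  · obtain ⟨k0, rfl⟩ := hd
    rw [Finset.sum_eq_single k0]
    · simp
    · intro b _ hb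
      rw [if_neg, mul_zero]
      exact fun hc => hb (Finsupp.single_left_injective one_ne_zero hc)
    · simp
  · rw [h.coeff_eq_zero (fun hdeg => hd (fre_deg_one d hdeg))]
    apply (Finset.sum_eq_zero fun k _ => ?_).symm
    rw [if_neg fun hc => hd ⟨k, hc.symm⟩, mul_zero]

lemma fre_deg_add {σ' : Type*} (a b : σ' →₀ ℕ) : (a + b).degree = a.degree + b.degree := by
  classical
  simp only [Finsupp.degree_eq_weight_one, map_add]

lemma fre_prod_X {N : ℕ} (σ : Finset (Fin N)) :
    (∏ k ∈ σ, (X k : MvPolynomial (Fin N) ℝ)) =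
      monomial (∑ k ∈ σ, Finsupp.single k 1) 1 := by
  rw [monomial_sum_one]
  rfl

/-- if for every face `σ ∈ Δ` and every `i ∈ σ` there is a linear form
`l ∈ Θ` with coefficient `1` at `∂_i` and coefficient `0` at `∂_k` for `k ∈ σ∖{i}`,
then `ℝ[∂_1,…,∂_N]/(I_Δ + (Θ))` is spanned over `ℝ` by the squarefree monomials
`∂_σ = ∏_{k∈σ} ∂_k`, `σ ∈ Δ`. -/
theorem stmt14 (N : ℕ) (Δ : Finset (Finset (Fin N)))
    (hΔ : ∀ σ ∈ Δ, ∀ τ ⊆ σ, τ ∈ Δ)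
    (Θ : Submodule ℝ (MvPolynomial (Fin N) ℝ))
    (hΘlin : ∀ l ∈ Θ, l.IsHomogeneous 1)
    (hΘ : ∀ σ ∈ Δ, ∀ i ∈ σ, ∃ l ∈ Θ,
      coeff (Finsupp.single i 1) l = 1 ∧
      ∀ k ∈ σ, k ≠ i → coeff (Finsupp.single k 1) l = 0) :
    Submodule.span ℝ
        {q : MvPolynomial (Fin N) ℝ ⧸ chowIdeal14 N Δ Θ |
          ∃ σ ∈ Δ, q = Ideal.Quotient.mk (chowIdeal14 N Δ Θ) (∏ k ∈ σ, X k)} = ⊤ := by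
  classical
  set I := chowIdeal14 N Δ Θ with hIdef
  set π : MvPolynomial (Fin N) ℝ →ₗ[ℝ] (MvPolynomial (Fin N) ℝ ⧸ I) :=
    (Ideal.Quotient.mkₐ ℝ I).toLinearMap with hπdef
  have hπ : ∀ p, π p = Ideal.Quotient.mk I p := fun p => rfl
  set M := Submodule.span ℝ
      {q : MvPolynomial (Fin N) ℝ ⧸ chowIdeal14 N Δ Θ |
        ∃ σ ∈ Δ, q = Ideal.Quotient.mk (chowIdeal14 N Δ Θ) (∏ k ∈ σ, X k)} with hMdef
  -- any monomial whose support is a non-face lies in the ideal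
  have hnon : ∀ m : Fin N →₀ ℕ, m.support ∉ Δ → (monomial m 1 : MvPolynomial (Fin N) ℝ) ∈ I := by
    intro m hm
    set s : Fin N →₀ ℕ := ∑ k ∈ m.support, Finsupp.single k 1 with hs
    have hsle : s ≤ m := by
      intro j
      have : s j = if j ∈ m.support then 1 else 0 := by
        rw [hs, Finsupp.finset_sum_apply]
        simp [Finsupp.single_apply, Finset.sum_ite_eq' m.support j (fun _ => 1)]
      rw [this]
      split
      · exact Nat.one_le_iff_ne_zero.2 (Finsupp.mem_support_iff.1 ‹_›)
      · exact Nat.zero_le _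
    have hdecomp : (monomial m 1 : MvPolynomial (Fin N) ℝ) =
        (∏ k ∈ m.support, X k) * monomial (m - s) 1 := by
      rw [fre_prod_X, monomial_mul, mul_one, ← hs, add_tsub_cancel_of_le hsle]
    rw [hdecomp]
    refine Ideal.mul_mem_right _ _ ?_
    exact (le_sup_left : srIdeal N Δ ≤ I) (Ideal.subset_span ⟨m.support, hm, rfl⟩)
  -- squarefree case
  have hsqfree : ∀ m : Fin N →₀ ℕ, m.degree ≤ m.support.card → π (monomial m 1) ∈ M := by
    intro m hm
    by_cases hσ : m.support ∈ Δ
    · have hone : ∀ j ∈ m.support, m j = 1 := by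
        intro j hj
        by_contra hj1
        have h2 : 2 ≤ m j := by
          have := Finsupp.mem_support_iff.1 hj; omega
        have : m.support.card + 1 ≤ m.degree := by
          rw [Finsupp.degree_apply, ← Finset.add_sum_erase _ _ hj]
          have : (m.support.erase j).card • 1 ≤ ∑ x ∈ m.support.erase j, m x :=
            Finset.card_nsmul_le_sum _ _ _ (fun x hx =>
              Nat.one_le_iff_ne_zero.2 (Finsupp.mem_support_iff.1 (Finset.mem_of_mem_erase hx)))
          simp only [smul_eq_mul, mul_one] at this
          have hcard : m.support.card = (m.support.erase j).card + 1 :=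
            (Finset.card_erase_add_one hj).symm
          omega
        omega
      have heq : (monomial m 1 : MvPolynomial (Fin N) ℝ) = ∏ k ∈ m.support, X k := by
        rw [← prod_X_pow_eq_monomial]
        exact Finset.prod_congr rfl fun x hx => by rw [hone x hx, pow_one]
      refine Submodule.subset_span ⟨m.support, hσ, ?_⟩
      rw [hπ, heq]
    · rw [hπ, Ideal.Quotient.eq_zero_iff_mem.2 (hnon m hσ)]
      exact Submodule.zero_mem M
  -- key induction
  have key : ∀ μ : ℕ, ∀ m : Fin N →₀ ℕ, m.degree ≤ m.support.card + μ →
      π (monomial m 1) ∈ M := by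
    intro μ
    induction μ with
    | zero => intro m hm; exact hsqfree m (by omega)
    | succ μ ih =>
      intro m hm
      by_cases hd : m.degree ≤ m.support.card
      · exact hsqfree m hd
      by_cases hσ : m.support ∈ Δ
      swap
      · rw [hπ, Ideal.Quotient.eq_zero_iff_mem.2 (hnon m hσ)]
        exact Submodule.zero_mem M
      -- there is an index with multiplicity ≥ 2
      have hex : ∃ i, 2 ≤ m i := by
        by_contra hc
        push_neg at hc
        apply hd
        rw [Finsupp.degree_apply]
        calc ∑ j ∈ m.support, m j ≤ ∑ j ∈ m.support, 1 :=
              Finset.sum_le_sum fun j _ => by have := hc j; omega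
          _ = m.support.card := by simp
      obtain ⟨i, hi2⟩ := hex
      have hiS : i ∈ m.support := Finsupp.mem_support_iff.2 (by omega)
      obtain ⟨l, hlΘ, hci, hc0⟩ := hΘ m.support hσ i hiS
      have hlI : l ∈ I := (le_sup_right : Ideal.span (Θ : Set _) ≤ I) (Ideal.subset_span hlΘ)
      set m' : Fin N →₀ ℕ := m - Finsupp.single i 1 with hm'
      have hsle : Finsupp.single i 1 ≤ m := by
        intro j
        rcases eq_or_ne j i with rfl | hji
        · simp; omega
        · simp [Finsupp.single_apply, if_neg (Ne.symm hji)]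
      have hm'add : ∀ k : Fin N, m' + Finsupp.single k 1 = m - Finsupp.single i 1 + Finsupp.single k 1 := fun _ => rfl
      have hmi : m' + Finsupp.single i 1 = m := by
        rw [hm', tsub_add_cancel_of_le hsle]
      have hm'app : ∀ j, m' j = m j - (if j = i then 1 else 0) := by
        intro j
        rcases eq_or_ne j i with rfl | hji
        · simp [hm']
        · simp [hm', Finsupp.single_apply, Ne.symm hji, hji]
      -- the product decomposition
      have hprod : (monomial m' 1 : MvPolynomial (Fin N) ℝ) * l =
          ∑ k : Fin N, coeff (Finsupp.single k 1) l • monomial (m' + Finsupp.single k 1) 1 := by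
        conv_lhs => rw [fre_hom1 l (hΘlin l hlΘ)]
        rw [Finset.mul_sum]
        refine Finset.sum_congr rfl fun k _ => ?_
        rw [smul_eq_C_mul, ← mul_assoc, mul_comm (monomial m' 1) (C _), mul_assoc]
        congr 1
        rw [show (X k : MvPolynomial (Fin N) ℝ) = X k ^ 1 by rw [pow_one],
          ← monomial_add_single]
      have hzero : (0 : MvPolynomial (Fin N) ℝ ⧸ I) =
          ∑ k : Fin N, coeff (Finsupp.single k 1) l • π (monomial (m' + Finsupp.single k 1) 1) := by
        have h1 : π ((monomial m' 1 : MvPolynomial (Fin N) ℝ) * l) = 0 := by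
          rw [hπ, Ideal.Quotient.eq_zero_iff_mem]
          exact I.mul_mem_left _ hlI
        rw [← h1, hprod, map_sum]
        exact Finset.sum_congr rfl fun k _ => (map_smul π _ _).symm
      have hsplit : π (monomial m 1) =
          - ∑ k ∈ Finset.univ.erase i,
              coeff (Finsupp.single k 1) l • π (monomial (m' + Finsupp.single k 1) 1) := by
        have := hzero
        rw [← Finset.add_sum_erase _ _ (Finset.mem_univ i)] at this
        rw [hmi, hci, one_smul] at this
        exact eq_neg_of_add_eq_zero_left this.symm
      rw [hsplit]
      refine Submodule.neg_mem M (Submodule.sum_mem M fun k hk => ?_)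
      have hki : k ≠ i := Finset.ne_of_mem_erase hk
      by_cases hkS : k ∈ m.support
      · rw [hc0 k hkS hki, zero_smul]
        exact Submodule.zero_mem M
      · refine Submodule.smul_mem M _ (ih (m' + Finsupp.single k 1) ?_)
        -- degree computation
        have hdeg : (m' + Finsupp.single k 1).degree = m.degree := by
          rw [fre_deg_add, fre_deg_single, ← hmi, fre_deg_add, fre_deg_single]
        have hsupp : insert k m.support ⊆ (m' + Finsupp.single k 1).support := by
          intro j hj
          rw [Finsupp.mem_support_iff, Finsupp.add_apply]
          rcases Finset.mem_insert.1 hj with rfl | hj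
          · simp
          · have hj0 := Finsupp.mem_support_iff.1 hj
            have := hm'app j
            rcases eq_or_ne j i with rfl | hji
            · rw [if_pos rfl] at this; omega
            · rw [if_neg hji] at this; omega
        have hcard : m.support.card + 1 ≤ (m' + Finsupp.single k 1).support.card := by
          have := Finset.card_le_card hsupp
          rwa [Finset.card_insert_of_notMem hkS] at this
        omega
  -- conclude
  rw [eq_top_iff]
  rintro x -
  obtain ⟨p, rfl⟩ := Ideal.Quotient.mk_surjective x
  rw [← hπ, ← support_sum_monomial_coeff p]
  rw [map_sum]
  refine Submodule.sum_mem M fun m hm => ?_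
  have : (monomial m (coeff m p) : MvPolynomial (Fin N) ℝ) = coeff m p • monomial m 1 := by
    rw [smul_eq_C_mul, C_mul_monomial, mul_one]
  rw [this, map_smul]
  exact Submodule.smul_mem M _ (key m.degree m (by omega))
end

section
/- Let Δ be a finite abstract simplicial complex on the vertex set {1,…,N}, let I_Δ ⊆ ℝ[∂_1,…,∂_N] be the ideal generated by the monomials ∏_{k∈S} ∂_k over subsets S ∉ Δ, and set 𝒜 = ℝ[∂_1,…,∂_N]/I_Δ. Let Θ′ ⊆ Θ ⊆ ℝ[∂_1,…,∂_N]_1 be linear subspaces of linear forms such that Θ′ satisfies: for every face σ ∈ Δ and every i ∈ σ there exists l ∈ Θ′ whose coefficient at ∂_i equals 1 and whose coefficient at ∂_k equals 0 for every k ∈ σ∖{i}. Then the ℝ-subspace Θ·𝒜 of 𝒜 is spanned by Θ′·𝒜 together with the elements l·∂_τ, where τ ranges over the faces of Δ, ∂_τ = ∏_{k∈τ} ∂_k, and l ranges over the elements of Θ whose coefficient at ∂_k is 0 for every k ∈ τ. -/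
open MvPolynomial

/-- For a subspace `U` of linear forms, the `ℝ`-span `U·𝒜` of all products `u·r`
inside the Stanley-Reisner ring `𝒜 = ℝ[∂_1,…,∂_N]/I_Δ`. -/
noncomputable def mulSpan (N : ℕ) (Δ : Finset (Finset (Fin N)))
    (U : Submodule ℝ (MvPolynomial (Fin N) ℝ)) :
    Submodule ℝ (MvPolynomial (Fin N) ℝ ⧸ srIdeal N Δ) :=
  Submodule.span ℝ
    {x | ∃ u ∈ U, ∃ r : MvPolynomial (Fin N) ℝ, x = Ideal.Quotient.mk (srIdeal N Δ) (u * r)}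

namespace Stmt15Aux

variable {N : ℕ}

lemma prodX (s : Finset (Fin N)) :
    (∏ k ∈ s, X k : MvPolynomial (Fin N) ℝ) = monomial (∑ k ∈ s, Finsupp.single k 1) 1 := by
  induction s using Finset.induction with
  | empty => simp
  | insert _ _ h ih =>
      rw [Finset.prod_insert h, Finset.sum_insert h, ih, X, monomial_mul, one_mul]

lemma sumsingle_apply (s : Finset (Fin N)) (j : Fin N) :
    (∑ k ∈ s, Finsupp.single k 1 : Fin N →₀ ℕ) j = if j ∈ s then 1 else 0 := by
  rw [Finsupp.finset_sum_apply]
  simp [Finsupp.single_apply]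

lemma monomial_mem_srIdeal (Δ : Finset (Finset (Fin N))) (a : Fin N →₀ ℕ)
    (ha : a.support ∉ Δ) : (monomial a 1 : MvPolynomial (Fin N) ℝ) ∈ srIdeal N Δ := by
  have hle : (∑ k ∈ a.support, Finsupp.single k 1) ≤ a := by
    intro k
    rw [sumsingle_apply]
    split
    · exact Nat.one_le_iff_ne_zero.2 (Finsupp.mem_support_iff.1 (by assumption))
    · exact Nat.zero_le _
  have heq : (monomial a 1 : MvPolynomial (Fin N) ℝ) =
      (∏ k ∈ a.support, X k) * monomial (a - ∑ k ∈ a.support, Finsupp.single k 1) 1 := by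
    rw [prodX, monomial_mul, one_mul, add_tsub_cancel_of_le hle]
  rw [heq]
  exact Ideal.mul_mem_right _ _ (Ideal.subset_span ⟨a.support, ha, rfl⟩)

lemma degree_one_single (m : Fin N →₀ ℕ) (h : m.sum (fun _ n => n) = 1) :
    ∃ k, m = Finsupp.single k 1 := by
  have hsum : ∑ i ∈ m.support, m i = 1 := h
  obtain ⟨k, hk⟩ : m.support.Nonempty := by
    rw [Finset.nonempty_iff_ne_empty]
    intro he
    rw [Finsupp.support_eq_empty] at he
    subst he
    simp at hsum
  have hrest : ∑ i ∈ m.support.erase k, m i + m k = 1 := by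
    rw [Finset.sum_erase_add _ _ hk]; exact hsum
  have hk1 : 1 ≤ m k := Nat.one_le_iff_ne_zero.2 (Finsupp.mem_support_iff.1 hk)
  have hmk : m k = 1 := by omega
  have hzero : ∑ i ∈ m.support.erase k, m i = 0 := by omega
  refine ⟨k, ?_⟩
  ext j
  rcases eq_or_ne j k with rfl | hjk
  · simp [hmk]
  · rw [Finsupp.single_apply, if_neg (Ne.symm hjk)]
    by_contra hj
    have hjs : j ∈ m.support.erase k := Finset.mem_erase.2 ⟨hjk, Finsupp.mem_support_iff.2 hj⟩
    exact hj ((Finset.sum_eq_zero_iff.1 hzero) j hjs)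

lemma hom1_eq (p : MvPolynomial (Fin N) ℝ) (hp : p.IsHomogeneous 1) :
    p = ∑ k : Fin N, coeff (Finsupp.single k 1) p • X k := by
  ext m
  rw [coeff_sum]
  simp only [coeff_smul, coeff_X', smul_eq_mul, mul_ite, mul_one, mul_zero]
  by_cases hm : ∃ k, m = Finsupp.single k 1
  · obtain ⟨k, rfl⟩ := hm
    rw [Finset.sum_eq_single k]
    · rw [if_pos rfl]
    · intro b _ hbk
      rw [if_neg]
      intro hc
      exact hbk (Finsupp.single_left_injective one_ne_zero hc)
    · intro hknot; exact absurd (Finset.mem_univ k) hknot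
  · have h0 : coeff m p = 0 := by
      refine hp.coeff_eq_zero ?_
      intro hd
      obtain ⟨k, hk⟩ := degree_one_single m (by simp only [Finsupp.degree, Finsupp.sum] at hd ⊢; exact hd)
      exact hm ⟨k, hk⟩
    rw [h0]
    symm
    refine Finset.sum_eq_zero fun k _ => ?_
    rw [if_neg]
    exact fun hc => hm ⟨k, hc.symm⟩

lemma mk_smul (I : Ideal (MvPolynomial (Fin N) ℝ)) (c : ℝ) (p : MvPolynomial (Fin N) ℝ) :
    Ideal.Quotient.mk I (c • p) = c • Ideal.Quotient.mk I p := by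
  rw [← Ideal.Quotient.mkₐ_eq_mk ℝ]
  exact map_smul (Ideal.Quotient.mkₐ ℝ I) c p

section Main

variable (Δ : Finset (Finset (Fin N)))
  (Θ Θ' : Submodule ℝ (MvPolynomial (Fin N) ℝ)) (hsub : Θ' ≤ Θ)
  (hΘlin : ∀ l ∈ Θ, l.IsHomogeneous 1)
  (hΘ' : ∀ σ ∈ Δ, ∀ i ∈ σ, ∃ l ∈ Θ',
      coeff (Finsupp.single i 1) l = 1 ∧
      ∀ k ∈ σ, k ≠ i → coeff (Finsupp.single k 1) l = 0)

/-- The right-hand side submodule. -/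
noncomputable def RHS : Submodule ℝ (MvPolynomial (Fin N) ℝ ⧸ srIdeal N Δ) :=
  mulSpan N Δ Θ' ⊔
    Submodule.span ℝ
      {x : MvPolynomial (Fin N) ℝ ⧸ srIdeal N Δ |
        ∃ τ ∈ Δ, ∃ l ∈ Θ, (∀ k ∈ τ, coeff (Finsupp.single k 1) l = 0) ∧
          x = Ideal.Quotient.mk (srIdeal N Δ) (l * ∏ k ∈ τ, X k)}

include hsub hΘ' in
/-- Reduction: modulo `mulSpan Θ'`, we may replace `u ∈ Θ` by `u' ∈ Θ` whose coefficients
vanish on the support of `a`. -/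
lemma reduce (a : Fin N →₀ ℕ) (hτ : a.support ∈ Δ) (u : MvPolynomial (Fin N) ℝ) (hu : u ∈ Θ) :
    ∃ u' ∈ Θ, (∀ k ∈ a.support, coeff (Finsupp.single k 1) u' = 0) ∧
      Ideal.Quotient.mk (srIdeal N Δ) (u * monomial a 1) -
        Ideal.Quotient.mk (srIdeal N Δ) (u' * monomial a 1) ∈ mulSpan N Δ Θ' := by
  set τ := a.support with hτdef
  have hl : ∀ i : τ, ∃ l ∈ Θ', coeff (Finsupp.single (i : Fin N) 1) l = 1 ∧
      ∀ k ∈ τ, k ≠ (i : Fin N) → coeff (Finsupp.single k 1) l = 0 :=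
    fun i => hΘ' τ hτ i i.2
  choose l hlΘ' hl1 hl0 using hl
  set u' : MvPolynomial (Fin N) ℝ :=
    u - ∑ i ∈ τ.attach, (coeff (Finsupp.single (i : Fin N) 1) u) • l i with hu'def
  refine ⟨u', ?_, ?_, ?_⟩
  · exact Submodule.sub_mem _ hu (Submodule.sum_mem _ fun i _ =>
      Submodule.smul_mem _ _ (hsub (hlΘ' i)))
  · intro k hk
    rw [hu'def, coeff_sub, coeff_sum]
    have : ∀ i ∈ τ.attach,
        coeff (Finsupp.single k 1) ((coeff (Finsupp.single (i : Fin N) 1) u) • l i) =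
        if i = (⟨k, hk⟩ : τ) then coeff (Finsupp.single k 1) u else 0 := by
      intro i _
      rw [coeff_smul]
      rcases eq_or_ne ((i : Fin N)) k with hik | hik
      · rw [if_pos (Subtype.ext hik), ← hik, hl1 i, smul_eq_mul, mul_one]
      · rw [if_neg (fun hc => hik (by rw [hc])), hl0 i k hk (Ne.symm hik), smul_eq_mul, mul_zero]
    rw [Finset.sum_congr rfl this, Finset.sum_ite_eq' τ.attach (⟨k, hk⟩ : τ)
      (fun _ => coeff (Finsupp.single k 1) u), if_pos (Finset.mem_attach _ _)]
    ring
  · have heq : u * monomial a 1 - u' * monomial a 1 =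
        ∑ i ∈ τ.attach, (coeff (Finsupp.single (i : Fin N) 1) u) • (l i * monomial a 1) := by
      rw [hu'def]
      rw [sub_mul, sub_sub_cancel, Finset.sum_mul]
      exact Finset.sum_congr rfl fun i _ => smul_mul_assoc _ _ _
    rw [← map_sub, heq, map_sum]
    refine Submodule.sum_mem _ fun i _ => ?_
    rw [mk_smul]
    exact Submodule.smul_mem _ _ (Submodule.subset_span ⟨l i, hlΘ' i, monomial a 1, rfl⟩)

include hsub hΘlin hΘ' in
lemma key (hΔ : ∀ σ ∈ Δ, ∀ τ ⊆ σ, τ ∈ Δ) :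
    ∀ e : ℕ, ∀ a : Fin N →₀ ℕ, a.sum (fun _ n => n) ≤ a.support.card + e →
    ∀ u ∈ Θ, Ideal.Quotient.mk (srIdeal N Δ) (u * monomial a 1) ∈ RHS Δ Θ Θ' := by
  have hnonface : ∀ a : Fin N →₀ ℕ, a.support ∉ Δ → ∀ u : MvPolynomial (Fin N) ℝ,
      Ideal.Quotient.mk (srIdeal N Δ) (u * monomial a 1) ∈ RHS Δ Θ Θ' := by
    intro a hτ u
    have hmem : u * monomial a 1 ∈ srIdeal N Δ :=
      Ideal.mul_mem_left _ _ (monomial_mem_srIdeal Δ a hτ)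
    rw [Ideal.Quotient.eq_zero_iff_mem.2 hmem]
    exact Submodule.zero_mem _
  have hsq : ∀ a : Fin N →₀ ℕ, a.support ∈ Δ → (∀ j ∈ a.support, a j = 1) →
      ∀ u ∈ Θ, Ideal.Quotient.mk (srIdeal N Δ) (u * monomial a 1) ∈ RHS Δ Θ Θ' := by
    intro a hτ hone u hu
    obtain ⟨u', hu', hc, hdiff⟩ := reduce Δ Θ Θ' hsub hΘ' a hτ u hu
    have hsplit : Ideal.Quotient.mk (srIdeal N Δ) (u * monomial a 1) =
        (Ideal.Quotient.mk (srIdeal N Δ) (u * monomial a 1) -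
          Ideal.Quotient.mk (srIdeal N Δ) (u' * monomial a 1)) +
        Ideal.Quotient.mk (srIdeal N Δ) (u' * monomial a 1) := by ring
    rw [hsplit]
    refine add_mem (Submodule.mem_sup_left hdiff) (Submodule.mem_sup_right ?_)
    have ha' : a = ∑ k ∈ a.support, Finsupp.single k 1 := by
      ext j
      rw [sumsingle_apply]
      split
      · exact hone j (by assumption)
      · exact Finsupp.notMem_support_iff.1 (by assumption)
    have hmon : (monomial a 1 : MvPolynomial (Fin N) ℝ) = ∏ k ∈ a.support, X k := by
      rw [prodX, ← ha']
    exact Submodule.subset_span ⟨a.support, hτ, u', hu', hc, by rw [hmon]⟩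
  intro e
  induction e with
  | zero =>
      intro a ha u hu
      by_cases hτ : a.support ∈ Δ
      · refine hsq a hτ (fun j hj => ?_) u hu
        by_contra hj1
        have h2 : 2 ≤ a j :=
          by have := Nat.one_le_iff_ne_zero.2 (Finsupp.mem_support_iff.1 hj); omega
        have hlt : a.support.card < a.sum (fun _ n => n) := by
          rw [Finsupp.sum, Finset.card_eq_sum_ones]
          exact Finset.sum_lt_sum
            (fun i hi => Nat.one_le_iff_ne_zero.2 (Finsupp.mem_support_iff.1 hi))
            ⟨j, hj, by omega⟩
        omega
      · exact hnonface a hτ u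
  | succ e ih =>
      intro a ha u hu
      by_cases hτ : a.support ∈ Δ
      · by_cases hone : ∀ j ∈ a.support, a j = 1
        · exact hsq a hτ hone u hu
        · push_neg at hone
          obtain ⟨j, hj, hj1⟩ := hone
          have h2 : 2 ≤ a j := by
            have := Nat.one_le_iff_ne_zero.2 (Finsupp.mem_support_iff.1 hj); omega
          -- reduce u to u' vanishing on the support
          obtain ⟨u', hu', hc, hdiff⟩ := reduce Δ Θ Θ' hsub hΘ' a hτ u hu
          have hsplit0 : Ideal.Quotient.mk (srIdeal N Δ) (u * monomial a 1) =
              (Ideal.Quotient.mk (srIdeal N Δ) (u * monomial a 1) -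
                Ideal.Quotient.mk (srIdeal N Δ) (u' * monomial a 1)) +
              Ideal.Quotient.mk (srIdeal N Δ) (u' * monomial a 1) := by ring
          rw [hsplit0]
          refine add_mem (Submodule.mem_sup_left hdiff) ?_
          -- now handle u' * monomial a 1
          set b : Fin N →₀ ℕ := a - Finsupp.single j 1 with hbdef
          have hle : Finsupp.single j 1 ≤ a := by
            intro k
            rw [Finsupp.single_apply]
            rcases eq_or_ne j k with rfl | h
            · rw [if_pos rfl]; omega
            · rw [if_neg h]; exact Nat.zero_le _
          have hadd : Finsupp.single j 1 + b = a := add_tsub_cancel_of_le hle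
          have hmon : (monomial a 1 : MvPolynomial (Fin N) ℝ) = X j * monomial b 1 := by
            rw [X, monomial_mul, one_mul, hadd]
          have hbsum : b.sum (fun _ n => n) + 1 = a.sum (fun _ n => n) := by
            have h1 : ((Finsupp.single j 1) + b).sum (fun _ n => n) =
                (Finsupp.single j 1).sum (fun _ n => n) + b.sum (fun _ n => n) :=
              Finsupp.sum_add_index' (fun _ => rfl) (fun _ _ _ => rfl)
            have h2' : (Finsupp.single j 1).sum (fun (_ : Fin N) (n : ℕ) => n) = 1 :=
              Finsupp.sum_single_index rfl
            rw [hadd] at h1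
            omega
          obtain ⟨l, hlΘ', hl1, hl0⟩ := hΘ' a.support hτ j hj
          set w : MvPolynomial (Fin N) ℝ := l - X j with hwdef
          have hw : w.IsHomogeneous 1 := (hΘlin l (hsub hlΘ')).sub (isHomogeneous_X _ _)
          have hwd := hom1_eq w hw
          have hdzero : ∀ k ∈ a.support, coeff (Finsupp.single k 1) w = 0 := by
            intro k hk
            rw [hwdef, coeff_sub, coeff_X']
            rcases eq_or_ne k j with rfl | hkj
            · rw [if_pos rfl, hl1, sub_self]
            · rw [if_neg (fun hcc => hkj (Finsupp.single_left_injective one_ne_zero hcc).symm),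
                hl0 k hk hkj, sub_zero]
          have hsplit : u' * monomial a 1 =
              l * (u' * monomial b 1) - u' * (w * monomial b 1) := by
            have hXj : (X j : MvPolynomial (Fin N) ℝ) = l - w := by rw [hwdef]; ring
            rw [hmon, hXj]; ring
          have hwm : w * monomial b 1 =
              ∑ k : Fin N, coeff (Finsupp.single k 1) w •
                (monomial (Finsupp.single k 1 + b) 1 : MvPolynomial (Fin N) ℝ) := by
            conv_lhs => rw [hwd]
            rw [Finset.sum_mul]
            refine Finset.sum_congr rfl fun k _ => ?_
            rw [smul_mul_assoc, X, monomial_mul, one_mul]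
          have hfinal : u' * monomial a 1 =
              l * (u' * monomial b 1) -
              ∑ k : Fin N, coeff (Finsupp.single k 1) w •
                (u' * monomial (Finsupp.single k 1 + b) 1) := by
            rw [hsplit, hwm, Finset.mul_sum]
            congr 1
            exact Finset.sum_congr rfl fun k _ => (mul_smul_comm _ _ _)
          rw [hfinal, map_sub, map_sum]
          refine sub_mem (Submodule.mem_sup_left
            (Submodule.subset_span ⟨l, hlΘ', u' * monomial b 1, rfl⟩)) ?_
          refine Submodule.sum_mem _ fun k _ => ?_
          rw [mk_smul]
          by_cases hkτ : k ∈ a.support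
          · rw [hdzero k hkτ, zero_smul]; exact Submodule.zero_mem _
          · refine Submodule.smul_mem _ _ ?_
            have hbsupp : b.support = a.support := by
              ext i
              simp only [Finsupp.mem_support_iff, hbdef, Finsupp.tsub_apply,
                Finsupp.single_apply]
              rcases eq_or_ne j i with rfl | h
              · rw [if_pos rfl]; omega
              · rw [if_neg h]; omega
            have hknotin : k ∉ b.support := by rw [hbsupp]; exact hkτ
            have hsupp : (Finsupp.single k 1 + b).support = insert k b.support := by
              rw [Finsupp.support_add_eq, Finsupp.support_single_ne_zero k one_ne_zero]
              · rfl
              · rw [Finsupp.support_single_ne_zero k one_ne_zero]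
                exact Finset.disjoint_singleton_left.2 hknotin
            have hbsum : (Finsupp.single k 1 + b).sum (fun _ n => n) = a.sum (fun _ n => n) := by
              rw [Finsupp.sum_add_index' (fun _ => rfl) (fun _ _ _ => rfl),
                Finsupp.sum_single_index rfl]
              omega
            have hbcard : (Finsupp.single k 1 + b).support.card = a.support.card + 1 := by
              rw [hsupp, Finset.card_insert_of_notMem hknotin, hbsupp]
            refine ih (Finsupp.single k 1 + b) ?_ u' hu'
            rw [hbsum, hbcard]
            omega
      · exact hnonface a hτ u

end Main

end Stmt15Aux

/-- under the stated hypothesis on `Θ′ ⊆ Θ`, the subspace `Θ·𝒜` of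
`𝒜 = ℝ[∂_1,…,∂_N]/I_Δ` is spanned by `Θ′·𝒜` together with the elements `l·∂_τ`
over faces `τ ∈ Δ` and `l ∈ Θ` whose coefficient at `∂_k` vanishes for all `k ∈ τ`. -/
theorem stmt15 (N : ℕ) (Δ : Finset (Finset (Fin N)))
    (hΔ : ∀ σ ∈ Δ, ∀ τ ⊆ σ, τ ∈ Δ)
    (Θ Θ' : Submodule ℝ (MvPolynomial (Fin N) ℝ)) (hsub : Θ' ≤ Θ)
    (hΘlin : ∀ l ∈ Θ, l.IsHomogeneous 1)
    (hΘ' : ∀ σ ∈ Δ, ∀ i ∈ σ, ∃ l ∈ Θ',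
      coeff (Finsupp.single i 1) l = 1 ∧
      ∀ k ∈ σ, k ≠ i → coeff (Finsupp.single k 1) l = 0) :
    mulSpan N Δ Θ =
      mulSpan N Δ Θ' ⊔
        Submodule.span ℝ
          {x : MvPolynomial (Fin N) ℝ ⧸ srIdeal N Δ |
            ∃ τ ∈ Δ, ∃ l ∈ Θ, (∀ k ∈ τ, coeff (Finsupp.single k 1) l = 0) ∧
              x = Ideal.Quotient.mk (srIdeal N Δ) (l * ∏ k ∈ τ, X k)} := by
  have hRHS : mulSpan N Δ Θ' ⊔
        Submodule.span ℝ
          {x : MvPolynomial (Fin N) ℝ ⧸ srIdeal N Δ |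
            ∃ τ ∈ Δ, ∃ l ∈ Θ, (∀ k ∈ τ, coeff (Finsupp.single k 1) l = 0) ∧
              x = Ideal.Quotient.mk (srIdeal N Δ) (l * ∏ k ∈ τ, X k)} =
      Stmt15Aux.RHS Δ Θ Θ' := rfl
  rw [hRHS]
  apply le_antisymm
  · rw [mulSpan, Submodule.span_le]
    rintro x ⟨u, hu, r, rfl⟩
    have hr : ∀ r : MvPolynomial (Fin N) ℝ,
        Ideal.Quotient.mk (srIdeal N Δ) (u * r) ∈ Stmt15Aux.RHS Δ Θ Θ' := by
      intro r
      induction r using MvPolynomial.induction_on' with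
      | monomial a c =>
          have hmc : (monomial a c : MvPolynomial (Fin N) ℝ) = c • monomial a 1 := by
            rw [smul_monomial, smul_eq_mul, mul_one]
          rw [hmc, mul_smul_comm, Stmt15Aux.mk_smul]
          exact Submodule.smul_mem _ _
            (Stmt15Aux.key Δ Θ Θ' hsub hΘlin hΘ' hΔ (a.sum fun _ n => n) a
              (Nat.le_add_left _ _) u hu)
      | add p q hp hq =>
          rw [mul_add, map_add]
          exact add_mem hp hq
    exact hr r
  · apply sup_le
    · rw [mulSpan, mulSpan, Submodule.span_le]
      rintro x ⟨u, hu, r, rfl⟩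
      exact Submodule.subset_span ⟨u, hsub hu, r, rfl⟩
    · rw [mulSpan, Submodule.span_le]
      rintro x ⟨τ, hτ, l, hl, hc, rfl⟩
      exact Submodule.subset_span ⟨l, hl, _, rfl⟩
end
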